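/- arXiv:1806.05322 — 2 statements merged into one kernel-verified Lean document; each statement's English description precedes it below -/
import Mathlib

section
/- Let (H(m))_{m∈ℕ} be a family of compact operators from F^n(ℝⁿ) to F^n(𝓗) converging in operator norm to the Hankel operator H, whose singular values are all nonzero and non-degenerate (all eigenspaces of HH* and H*H are one-dimensional). Let H = Σ_k σ_k ⟨·,e_k⟩ f_k and H(m) = Σ_k σ_k(m) ⟨·,e_k(m)⟩ f_k(m) be singular value decompositions with singular values ordered decreasingly. Then the singular vectors converge in norm: for each j, writing e_j = r(m) e_j(m) + x_j(m) with ⟨e_j(m), x_j(m)⟩ = 0, one has ‖x_j(m)‖² ≤ (σ_j² − (σ_j − 2‖H_j − H_j(m)‖)²)/(σ_j² − σ_{j+1}²) → 0 as m → ∞, where H_j := H − Σ_{k<j} σ_k ⟨·,e_k⟩ f_k and H_j(m) := H(m) − Σ_{k<j} σ_k(m) ⟨·,e_k(m)⟩ f_k(m); the analogous statement holds for the vectors f_j. -/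
open MeasureTheory ContinuousLinearMap Filter
open scoped ENNReal NNReal Topology RealInnerProductSpace

noncomputable section
set_option linter.unusedSectionVars false
set_option linter.unusedVariables false
set_option maxHeartbeats 1000000
set_option synthInstance.maxHeartbeats 1000000

/-- The open positive orthant `(0,∞)^m`. -/
def posOrthant (m : ℕ) : Set (Fin m → ℝ) := {t | ∀ i, 0 < t i}

/-- Lebesgue measure restricted to the positive orthant. -/
def orthantMeasure (m : ℕ) : Measure (Fin m → ℝ) := volume.restrict (posOrthant m)

/-- Hilbert-space model of the tensor product `H ⊗ (ℝⁿ)^{⊗ k}`: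
functions from multi-indices to `H`, with the `ℓ²` norm. -/
abbrev Tens (H : Type*) [NormedAddCommGroup H] [InnerProductSpace ℝ H] (n k : ℕ) :=
  PiLp 2 (fun _ : Fin k → Fin n => H)

instance Tens.instCompleteSpace {H : Type*} [NormedAddCommGroup H] [InnerProductSpace ℝ H]
    [CompleteSpace H] (n k : ℕ) : CompleteSpace (Tens H n k) :=
  inferInstanceAs (CompleteSpace (PiLp 2 (fun _ : Fin k → Fin n => H)))

section norms

variable {X Y : Type*} [NormedAddCommGroup X] [InnerProductSpace ℝ X]
  [NormedAddCommGroup Y] [InnerProductSpace ℝ Y]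

/-- Trace (nuclear) norm of an operator between real inner-product spaces: the supremum
over finite orthonormal systems `(e_i)`, `(f_i)` of `∑ i |⟨f_i, T e_i⟩|`. -/
def traceNorm (T : X →L[ℝ] Y) : ℝ≥0∞ :=
  ⨆ (m : ℕ) (e : {e : Fin m → X // Orthonormal ℝ e}) (f : {f : Fin m → Y // Orthonormal ℝ f}),
    ∑ i, (‖(inner ℝ (f.1 i) (T (e.1 i)) : ℝ)‖₊ : ℝ≥0∞)

/-- Square of the Hilbert–Schmidt norm, as a supremum over finite orthonormal systems. -/
def hsNormSq (T : X →L[ℝ] Y) : ℝ≥0∞ :=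
  ⨆ (m : ℕ) (e : {e : Fin m → X // Orthonormal ℝ e}), ∑ i, (‖T (e.1 i)‖₊ : ℝ≥0∞) ^ 2

/-- Hilbert–Schmidt norm. -/
def hsNorm (T : X →L[ℝ] Y) : ℝ≥0∞ := hsNormSq T ^ (1 / 2 : ℝ)

/-- A bounded operator is trace class if its trace norm is finite. -/
def IsTraceClass (T : X →L[ℝ] Y) : Prop := traceNorm T < ⊤

/-- A bounded operator is Hilbert–Schmidt if its Hilbert–Schmidt norm is finite. -/
def IsHilbertSchmidt (T : X →L[ℝ] Y) : Prop := hsNormSq T < ⊤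

/-- The `i`-th singular value of an operator between Hilbert spaces, defined as its `i`-th
approximation number (the distance, in operator norm, to operators of rank at most `i`). -/
def singularValue (i : ℕ) (T : X →L[ℝ] Y) : ℝ :=
  ⨅ S : {S : X →L[ℝ] Y // Module.rank ℝ (LinearMap.range (S : X →ₗ[ℝ] Y)) ≤ i}, ‖T - S.1‖

end norms

section system

variable {X H : Type*} [NormedAddCommGroup X] [InnerProductSpace ℝ X] [CompleteSpace X]
  [NormedAddCommGroup H] [InnerProductSpace ℝ H] [CompleteSpace H] {n : ℕ}

/-- An exponentially stable `C₀`-semigroup satisfying `‖T(t)‖ ≤ M e^{-ν t}`. -/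
def IsC0SemigroupWith (T : ℝ → X →L[ℝ] X) (M ν : ℝ) : Prop :=
  1 ≤ M ∧ 0 < ν ∧ T 0 = 1 ∧ (∀ s t : ℝ, 0 ≤ s → 0 ≤ t → T (s + t) = T s * T t) ∧
    (∀ x : X, ContinuousOn (fun t => T t x) (Set.Ici (0 : ℝ))) ∧
    (∀ t : ℝ, 0 ≤ t → ‖T t‖ ≤ M * Real.exp (-ν * t))

/-- `Γ² = ∑ᵢ ‖Nᵢ Nᵢ^*‖`. -/
def gammaSq (N : Fin n → X →L[ℝ] X) : ℝ := ∑ i, ‖N i * adjoint (N i)‖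

/-- The stability condition `M² Γ² (2ν)⁻¹ < 1`. -/
def StabilityCond (N : Fin n → X →L[ℝ] X) (M ν : ℝ) : Prop :=
  M ^ 2 * gammaSq N / (2 * ν) < 1

/-- The operator chain `T(t₀) N_{α 0} T(t₁) ⋯ N_{α (k-1)} T(t_k)`. -/
def Ochain (T : ℝ → X →L[ℝ] X) (N : Fin n → X →L[ℝ] X) {k : ℕ}
    (t : Fin (k + 1) → ℝ) (α : Fin k → Fin n) : X →L[ℝ] X :=
  T (t 0) * (List.ofFn fun l : Fin k => N (α l) * T (t l.succ)).prod

/-- The adjoint operator chain `T(t₀)^* N_{α 0}^* T(t₁)^* ⋯ N_{α (k-1)}^* T(t_k)^*`. -/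
def Pchain (T : ℝ → X →L[ℝ] X) (N : Fin n → X →L[ℝ] X) {k : ℕ}
    (t : Fin (k + 1) → ℝ) (α : Fin k → Fin n) : X →L[ℝ] X :=
  (List.ofFn fun l : Fin k => adjoint (T (t l.castSucc)) * adjoint (N (α l))).prod *
    adjoint (T (t (Fin.last k)))

/-- The kernel `O_k(t)` of the observability map: the component at the multi-index
`α = (n₁,…,n_k)` is `C T(t₀) N_{n₁} T(t₁) ⋯ N_{n_k} T(t_k)`. -/
def Ok (T : ℝ → X →L[ℝ] X) (N : Fin n → X →L[ℝ] X) (C : X →L[ℝ] H) (k : ℕ)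
    (t : Fin (k + 1) → ℝ) : X →L[ℝ] Tens H n k :=
  (PiLp.continuousLinearEquiv 2 ℝ _).symm.toContinuousLinearMap.comp
    (ContinuousLinearMap.pi fun α : Fin k → Fin n => C.comp (Ochain T N t α))

/-- The kernel `P_k(t)` of the reachability map: the component at the multi-index
`α = (n₁,…,n_k)` is `T(t₀)^* N_{n₁}^* T(t₁)^* ⋯ N_{n_k}^* T(t_k)^*`. -/
def Pk (T : ℝ → X →L[ℝ] X) (N : Fin n → X →L[ℝ] X) (k : ℕ)
    (t : Fin (k + 1) → ℝ) : X →L[ℝ] Tens X n k :=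
  (PiLp.continuousLinearEquiv 2 ℝ _).symm.toContinuousLinearMap.comp
    (ContinuousLinearMap.pi fun α : Fin k → Fin n => Pchain T N t α)

/-- `B ⊗ id_{(ℝⁿ)^{⊗k}}` in the tensor model. -/
def tensMap {E F : Type*} [NormedAddCommGroup E] [InnerProductSpace ℝ E]
    [NormedAddCommGroup F] [InnerProductSpace ℝ F] (B : E →L[ℝ] F) (n k : ℕ) :
    Tens E n k →L[ℝ] Tens F n k :=
  (PiLp.continuousLinearEquiv 2 ℝ _).symm.toContinuousLinearMap.comp
    ((ContinuousLinearMap.pi fun α : Fin k → Fin n =>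
      B.comp (ContinuousLinearMap.proj α)).comp
        (PiLp.continuousLinearEquiv 2 ℝ _).toContinuousLinearMap)

/-- The control operator `B : ℝⁿ → X`, `Bu = ∑ᵢ uᵢ ψᵢ`. -/
def Bop (ψ : Fin n → X) : EuclideanSpace ℝ (Fin n) →L[ℝ] X :=
  LinearMap.toContinuousLinearMap
    { toFun := fun u => ∑ i, u i • ψ i
      map_add' := by
        intro u v
        simp [add_smul, Finset.sum_add_distrib]
      map_smul' := by
        intro c u
        simp [smul_smul, Finset.smul_sum] }

/-- The fibre `F^n_{k+1}(H) = L²((0,∞)^{k+1}, H ⊗ (ℝⁿ)^{⊗k})` of the Fock space. -/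
abbrev FockFiber (H : Type*) [NormedAddCommGroup H] [InnerProductSpace ℝ H] (n k : ℕ) :=
  MeasureTheory.Lp (α := Fin (k + 1) → ℝ) (Tens H n k) 2 (orthantMeasure (k + 1))

/-- The Fock space `F^n(H) = ⊕_{k ≥ 0} F^n_{k+1}(H)` (Hilbert direct sum). -/
abbrev Fock (H : Type*) [NormedAddCommGroup H] [InnerProductSpace ℝ H] (n : ℕ) :=
  lp (fun k : ℕ => FockFiber H n k) 2

/-- `(W_k)` is the family of observability blocks: `W_k x = O_k(·) x` a.e. on the orthant. -/
def IsObsBlocks (T : ℝ → X →L[ℝ] X) (N : Fin n → X →L[ℝ] X) (C : X →L[ℝ] H)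
    (Wk : ∀ k : ℕ, X →L[ℝ] FockFiber H n k) : Prop :=
  ∀ (k : ℕ) (x : X), ∀ᵐ t ∂(orthantMeasure (k + 1)),
    (Wk k x : (Fin (k + 1) → ℝ) → Tens H n k) t = Ok T N C k t x

/-- `W` is the observability map assembled from the blocks `W_k`. -/
def IsObsMap (Wk : ∀ k : ℕ, X →L[ℝ] FockFiber H n k) (W : X →L[ℝ] Fock H n) : Prop :=
  ∀ (x : X) (k : ℕ), (W x : ∀ k, FockFiber H n k) k = Wk k x

/-- `(R_k)` is the family of reachability blocks: `R_k f = ∫ P_k(t)^* (B ⊗ id) f(t) dt`. -/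
def IsReachBlocks (T : ℝ → X →L[ℝ] X) (N : Fin n → X →L[ℝ] X) (ψ : Fin n → X)
    (Rk : ∀ k : ℕ, FockFiber (EuclideanSpace ℝ (Fin n)) n k →L[ℝ] X) : Prop :=
  ∀ (k : ℕ) (f : FockFiber (EuclideanSpace ℝ (Fin n)) n k),
    Rk k f = ∫ t, adjoint (Pk T N k t) (tensMap (Bop ψ) n k (f t)) ∂(orthantMeasure (k + 1))

/-- `R` is the reachability map assembled from the blocks `R_k`. -/
def IsReachMap (Rk : ∀ k : ℕ, FockFiber (EuclideanSpace ℝ (Fin n)) n k →L[ℝ] X)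
    (R : Fock (EuclideanSpace ℝ (Fin n)) n →L[ℝ] X) : Prop :=
  ∀ f : Fock (EuclideanSpace ℝ (Fin n)) n,
    R f = ∑' k : ℕ, Rk k ((f : ∀ k, FockFiber (EuclideanSpace ℝ (Fin n)) n k) k)

end system


namespace SVDAux
variable {E F : Type*} [NormedAddCommGroup E] [InnerProductSpace ℝ E] [CompleteSpace E]
  [NormedAddCommGroup F] [InnerProductSpace ℝ F] [CompleteSpace F]

variable {E F : Type*} [NormedAddCommGroup E] [InnerProductSpace ℝ E] [CompleteSpace E]
  [NormedAddCommGroup F] [InnerProductSpace ℝ F] [CompleteSpace F]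
variable {T T' : E →L[ℝ] F} {σ σ' : ℕ → ℝ} {e e' : ℕ → E} {f f' : ℕ → F}

def tailOp (T : E →L[ℝ] F) (σ : ℕ → ℝ) (e : ℕ → E) (f : ℕ → F) (j : ℕ) : E →L[ℝ] F :=
  T - ∑ k ∈ Finset.range j, σ k • (innerSL ℝ (e k)).smulRight (f k)

def tc (σ : ℕ → ℝ) (e : ℕ → E) (j : ℕ) (g : E) (k : ℕ) : ℝ :=
  if k < j then 0 else σ k * ⟪e k, g⟫

lemma hasSum_tail (T : E →L[ℝ] F) (σ : ℕ → ℝ) (e : ℕ → E) (f : ℕ → F)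
    (hSVD : ∀ g, HasSum (fun k => σ k • (inner ℝ (e k) g : ℝ) • f k) (T g)) (j : ℕ) (g : E) :
    HasSum (fun k => tc σ e j g k • f k) (tailOp T σ e f j g) := by
  have hu := hSVD g
  have hv : HasSum (fun k => if k < j then σ k • (inner ℝ (e k) g : ℝ) • f k else 0)
      (∑ k ∈ Finset.range j, σ k • (inner ℝ (e k) g : ℝ) • f k) := by
    have h : HasSum (fun k => if k < j then σ k • (inner ℝ (e k) g : ℝ) • f k else 0)
        (∑ k ∈ Finset.range j, (if k < j then σ k • (inner ℝ (e k) g : ℝ) • f k else 0)) :=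
      hasSum_sum_of_ne_finset_zero (s := Finset.range j)
      (f := fun k => if k < j then σ k • (inner ℝ (e k) g : ℝ) • f k else 0)
      (by intro k hk; exact if_neg (by simpa using hk))
    have hs : ∑ k ∈ Finset.range j, (if k < j then σ k • (inner ℝ (e k) g : ℝ) • f k else 0)
        = ∑ k ∈ Finset.range j, σ k • (inner ℝ (e k) g : ℝ) • f k :=
      Finset.sum_congr rfl fun k hk => if_pos (Finset.mem_range.mp hk)
    rwa [hs] at h
  have hsub := hu.sub hv
  have hval : T g - ∑ k ∈ Finset.range j, σ k • (inner ℝ (e k) g : ℝ) • f k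
      = tailOp T σ e f j g := by
    simp [tailOp, ContinuousLinearMap.sub_apply, ContinuousLinearMap.sum_apply,
      ContinuousLinearMap.smul_apply, ContinuousLinearMap.smulRight_apply, innerSL_apply_apply]
  rw [hval] at hsub
  refine hsub.congr_fun fun k => ?_
  by_cases hk : k < j
  · simp [tc, hk]
  · simp [tc, hk, smul_smul]

lemma coeff_of_hasSum {f : ℕ → F} (hf : Orthonormal ℝ f) {c : ℕ → ℝ} {y : F}
    (h : HasSum (fun k => c k • f k) y) (i : ℕ) : ⟪f i, y⟫ = c i := by
  have h2 : HasSum (fun k => ⟪f i, c k • f k⟫) ⟪f i, y⟫ :=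
    (innerSL ℝ (f i)).hasSum h
  have h3 : HasSum (fun k => if k = i then c i else (0:ℝ)) ⟪f i, y⟫ := by
    refine h2.congr_fun fun k => ?_
    rw [real_inner_smul_right, orthonormal_iff_ite.mp hf]
    by_cases hk : i = k
    · subst hk; simp
    · simp [hk, Ne.symm hk]
  have h4 : HasSum (fun k => if k = i then c i else (0:ℝ)) (c i) := hasSum_ite_eq i (c i)
  exact h3.unique h4

lemma normSq_of_hasSum {f : ℕ → F} (hf : Orthonormal ℝ f) {c : ℕ → ℝ} {y : F}
    (h : HasSum (fun k => c k • f k) y) :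
    HasSum (fun k => c k ^ 2) (‖y‖ ^ 2) := by
  have h2 : HasSum (fun k => ⟪y, c k • f k⟫) ⟪y, y⟫ := (innerSL ℝ y).hasSum h
  have h3 : HasSum (fun k => c k ^ 2) ⟪y, y⟫ := by
    refine h2.congr_fun fun k => ?_
    rw [real_inner_smul_right, real_inner_comm, coeff_of_hasSum hf h k]; ring
  rwa [real_inner_self_eq_norm_sq] at h3

lemma tail_norm_le (he : Orthonormal ℝ e) (hf : Orthonormal ℝ f)
    (hSVD : ∀ g, HasSum (fun k => σ k • (inner ℝ (e k) g : ℝ) • f k) (T g)) (j : ℕ) (g : E)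
    {s : ℝ} (hs : 0 ≤ s)
    (hb : ∀ k, j ≤ k → (σ k * ⟪e k, g⟫) ^ 2 ≤ s ^ 2 * ⟪e k, g⟫ ^ 2) :
    ‖tailOp T σ e f j g‖ ≤ s * ‖g‖ := by
  have h1 := normSq_of_hasSum hf (hasSum_tail T σ e f hSVD j g)
  have hsum : Summable fun k => (⟪e k, g⟫ : ℝ) ^ 2 := by
    have := he.inner_products_summable (x := g)
    simpa [Real.norm_eq_abs, sq_abs] using this
  have h2 : ‖tailOp T σ e f j g‖ ^ 2 ≤ s ^ 2 * ‖g‖ ^ 2 := by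
    have hle : ∀ k, tc σ e j g k ^ 2 ≤ s ^ 2 * ⟪e k, g⟫ ^ 2 := by
      intro k
      by_cases hk : k < j
      · simp [tc, hk]; positivity
      · simpa [tc, hk] using hb k (le_of_not_gt hk)
    have h3 : ‖tailOp T σ e f j g‖ ^ 2 ≤ ∑' k, s ^ 2 * ⟪e k, g⟫ ^ 2 := by
      rw [← h1.tsum_eq]
      exact Summable.tsum_le_tsum hle h1.summable (hsum.mul_left _)
    have h4 : ∑' k, s ^ 2 * ⟪e k, g⟫ ^ 2 ≤ s ^ 2 * ‖g‖ ^ 2 := by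
      rw [tsum_mul_left]
      refine mul_le_mul_of_nonneg_left ?_ (by positivity)
      have := he.tsum_inner_products_le (x := g)
      simpa [Real.norm_eq_abs, sq_abs] using this
    linarith
  nlinarith [norm_nonneg ((tailOp T σ e f j) g), mul_nonneg hs (norm_nonneg g)]

lemma tail_apply_e (he : Orthonormal ℝ e)
    (hSVD : ∀ g, HasSum (fun k => σ k • (inner ℝ (e k) g : ℝ) • f k) (T g))
    {j i : ℕ} (hij : j ≤ i) : tailOp T σ e f j (e i) = σ i • f i := by
  have h1 := hasSum_tail T σ e f hSVD j (e i)
  have h2 : HasSum (fun k => if k = i then σ i • f i else 0) (tailOp T σ e f j (e i)) := by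
    refine h1.congr_fun fun k => ?_
    rw [tc, orthonormal_iff_ite.mp he]
    by_cases hk : k = i
    · subst hk; simp [Nat.not_lt.mpr hij]
    · simp [hk]
  exact h2.unique (hasSum_ite_eq i _) |>.symm ▸ rfl

lemma pyth (he : Orthonormal ℝ e) (hf : Orthonormal ℝ f)
    (hSVD : ∀ g, HasSum (fun k => σ k • (inner ℝ (e k) g : ℝ) • f k) (T g)) (j : ℕ) (g : E) :
    ‖tailOp T σ e f j g‖ ^ 2 =
      (σ j * ⟪e j, g⟫) ^ 2 + ‖tailOp T σ e f j (g - ⟪e j, g⟫ • e j)‖ ^ 2 := by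
  set x := g - ⟪e j, g⟫ • e j with hx
  have h1 := normSq_of_hasSum hf (hasSum_tail T σ e f hSVD j g)
  have h2 := normSq_of_hasSum hf (hasSum_tail T σ e f hSVD j x)
  have h3 : HasSum (fun k => (if k = j then (σ j * ⟪e j, g⟫) ^ 2 else 0) + tc σ e j x k ^ 2)
      ((σ j * ⟪e j, g⟫) ^ 2 + ‖tailOp T σ e f j x‖ ^ 2) :=
    (hasSum_ite_eq j _).add h2
  have h4 : ∀ k, tc σ e j g k ^ 2
      = (if k = j then (σ j * ⟪e j, g⟫) ^ 2 else 0) + tc σ e j x k ^ 2 := by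
    intro k
    have hin : ⟪e k, x⟫ = ⟪e k, g⟫ - ⟪e j, g⟫ * ⟪e k, e j⟫ := by
      simp [hx, inner_sub_right, real_inner_smul_right, mul_comm]
    by_cases hkj : k = j
    · subst hkj
      have : ⟪e k, x⟫ = 0 := by
        rw [hin, orthonormal_iff_ite.mp he]; simp
      simp [tc, this, Nat.lt_irrefl]
    · have : ⟪e k, x⟫ = ⟪e k, g⟫ := by
        rw [hin, orthonormal_iff_ite.mp he, if_neg hkj]; ring
      simp [tc, this, hkj]
  exact h1.unique (h3.congr_fun fun k => h4 k)

lemma mul_sq_le {a b c : ℝ} (h : a ^ 2 ≤ b ^ 2) : (a * c) ^ 2 ≤ b ^ 2 * c ^ 2 := by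
  nlinarith [sq_nonneg c]

lemma le_of_sq_le_sq' {a b : ℝ} (h : a ^ 2 ≤ b ^ 2) (ha : 0 ≤ a) (hb : 0 ≤ b) : a ≤ b := by
  nlinarith

lemma alg_key {sj s1 δ t : ℝ} (h3 : 0 ≤ δ) (h4 : 2 * δ ≤ sj - s1) (h5 : 0 < s1)
    (h5' : s1 < sj) (h6 : 0 ≤ t)
    (hchain : (sj - δ) ^ 2 ≤ (sj + δ) ^ 2 * (1 - t) + (s1 + δ) ^ 2 * t) :
    t * (sj ^ 2 - s1 ^ 2) ≤ sj ^ 2 - (sj - 2 * δ) ^ 2 := by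
  have hD : 0 < sj ^ 2 - s1 ^ 2 := by nlinarith
  have hP : 0 < (sj + δ) ^ 2 - (s1 + δ) ^ 2 := by nlinarith
  have h7 : t * ((sj + δ) ^ 2 - (s1 + δ) ^ 2) ≤ 4 * sj * δ := by nlinarith
  have h9 : 0 ≤ 4 * δ ^ 2 * (sj - s1) * ((sj - s1) - 2 * δ) := by
    have h9a : 0 ≤ (sj - s1) - 2 * δ := by linarith
    have h9c : 0 ≤ sj - s1 := by linarith
    have h9b : 0 ≤ (4:ℝ) * δ ^ 2 * (sj - s1) :=
      mul_nonneg (by positivity) h9c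
    exact mul_nonneg h9b h9a
  have h8 : 4 * sj * δ * (sj ^ 2 - s1 ^ 2) ≤ (4 * sj * δ - 4 * δ ^ 2) * ((sj + δ) ^ 2 - (s1 + δ) ^ 2) := by
    have hid : (4 * sj * δ - 4 * δ ^ 2) * ((sj + δ) ^ 2 - (s1 + δ) ^ 2) - 4 * sj * δ * (sj ^ 2 - s1 ^ 2)
        = 4 * δ ^ 2 * (sj - s1) * ((sj - s1) - 2 * δ) := by ring
    linarith
  have h10 : t * (sj ^ 2 - s1 ^ 2) * ((sj + δ) ^ 2 - (s1 + δ) ^ 2) ≤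
      (4 * sj * δ - 4 * δ ^ 2) * ((sj + δ) ^ 2 - (s1 + δ) ^ 2) := by
    have h11 : t * (sj ^ 2 - s1 ^ 2) * ((sj + δ) ^ 2 - (s1 + δ) ^ 2)
        = (t * ((sj + δ) ^ 2 - (s1 + δ) ^ 2)) * (sj ^ 2 - s1 ^ 2) := by ring
    rw [h11]
    calc (t * ((sj + δ) ^ 2 - (s1 + δ) ^ 2)) * (sj ^ 2 - s1 ^ 2)
        ≤ (4 * sj * δ) * (sj ^ 2 - s1 ^ 2) := mul_le_mul_of_nonneg_right h7 hD.le
    _ ≤ _ := h8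
  have h12 : t * (sj ^ 2 - s1 ^ 2) ≤ 4 * sj * δ - 4 * δ ^ 2 := le_of_mul_le_mul_right h10 hP
  nlinarith

lemma key_bound (he : Orthonormal ℝ e) (hf : Orthonormal ℝ f)
    (hσpos : ∀ k, 0 < σ k) (hσ : StrictAnti σ)
    (hSVD : ∀ g, HasSum (fun k => σ k • (inner ℝ (e k) g : ℝ) • f k) (T g))
    (he' : Orthonormal ℝ e') (hf' : Orthonormal ℝ f')
    (hσ'0 : ∀ k, 0 ≤ σ' k) (hσ'a : Antitone σ')
    (hSVD' : ∀ g, HasSum (fun k => σ' k • (inner ℝ (e' k) g : ℝ) • f' k) (T' g)) (j : ℕ)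
    (hδsmall : 2 * ‖tailOp T σ e f j - tailOp T' σ' e' f' j‖ ≤ σ j - σ (j + 1)) :
    ‖e j - ⟪e' j, e j⟫ • e' j‖ ^ 2 ≤
      (σ j ^ 2 - (σ j - 2 * ‖tailOp T σ e f j - tailOp T' σ' e' f' j‖) ^ 2) /
        (σ j ^ 2 - σ (j + 1) ^ 2) := by
  set A := tailOp T σ e f j with hA
  set A' := tailOp T' σ' e' f' j with hA'
  set δ := ‖A - A'‖ with hδdef
  have hδ0 : 0 ≤ δ := norm_nonneg _
  have hσa : Antitone σ := hσ.antitone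
  set r : ℝ := ⟪e' j, e j⟫ with hr
  have hba : (⟪e j, e' j⟫ : ℝ) = r := by rw [hr]; exact real_inner_comm _ _
  set x : E := e j - r • e' j with hx
  set t : ℝ := ‖x‖ ^ 2 with ht
  have hne : ‖e j‖ = 1 := he.1 j
  have hne' : ‖e' j‖ = 1 := he'.1 j
  have hd : 0 < σ j - σ (j+1) := sub_pos.mpr (hσ (Nat.lt_succ_self j))
  have hD : 0 < σ j ^ 2 - σ (j+1) ^ 2 := by nlinarith [hσpos j, hσpos (j+1)]
  -- operator norm bounds
  have hAbd : ∀ g (s : ℝ), 0 ≤ s → (∀ k, j ≤ k → (σ k * ⟪e k, g⟫)^2 ≤ s^2 * ⟪e k, g⟫^2) →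
      ‖A g‖ ≤ s * ‖g‖ := fun g s hs hb => tail_norm_le he hf hSVD j g hs hb
  have hA'bd : ∀ g (s : ℝ), 0 ≤ s → (∀ k, j ≤ k → (σ' k * ⟪e' k, g⟫)^2 ≤ s^2 * ⟪e' k, g⟫^2) →
      ‖A' g‖ ≤ s * ‖g‖ := fun g s hs hb => tail_norm_le he' hf' hSVD' j g hs hb
  -- basic: ‖A g‖ ≤ σ j ‖g‖
  have hAop : ∀ g, ‖A g‖ ≤ σ j * ‖g‖ := by
    intro g
    refine hAbd g (σ j) (hσpos j).le fun k hk => ?_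
    exact mul_sq_le (pow_le_pow_left₀ (hσpos k).le (hσa hk) 2)
  -- (a) lower bound on ‖A' e_j‖
  have hAe : ‖A (e j)‖ = σ j := by
    rw [tail_apply_e he hSVD le_rfl, norm_smul, hf.1 j]
    simp [abs_of_pos (hσpos j)]
  have hd1 : σ j - δ ≤ ‖A' (e j)‖ := by
    have h1 : ‖A (e j) - A' (e j)‖ ≤ δ := by
      calc ‖A (e j) - A' (e j)‖ = ‖(A - A') (e j)‖ := by simp
      _ ≤ δ * ‖e j‖ := (A - A').le_opNorm _
      _ = δ := by rw [hne, mul_one]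
    have := norm_sub_norm_le (A (e j)) (A' (e j))
    rw [hAe] at this
    linarith
  -- (b) σ' j ≤ σ j + δ
  have hA'e' : ‖A' (e' j)‖ = σ' j := by
    rw [tail_apply_e he' hSVD' le_rfl, norm_smul, hf'.1 j]
    simp [abs_of_nonneg (hσ'0 j)]
  have hb2 : σ' j ≤ σ j + δ := by
    have h1 : ‖A' (e' j) - A (e' j)‖ ≤ δ := by
      calc ‖A' (e' j) - A (e' j)‖ = ‖(A - A') (e' j)‖ := by rw [norm_sub_rev]; simp
      _ ≤ δ * ‖e' j‖ := (A - A').le_opNorm _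
      _ = δ := by rw [hne', mul_one]
    have h2 : ‖A (e' j)‖ ≤ σ j := by
      have := hAop (e' j); rwa [hne', mul_one] at this
    have := norm_sub_norm_le (A' (e' j)) (A (e' j))
    rw [hA'e'] at this
    linarith
  have hxorth : (⟪e' j, x⟫ : ℝ) = 0 := by
    rw [hx, inner_sub_right, real_inner_smul_right, ← hr, real_inner_self_eq_norm_sq, hne']
    ring
  -- (c) σ' (j+1) ≤ σ (j+1) + δ
  have hb3 : σ' (j + 1) ≤ σ (j + 1) + δ := by
    -- bound for A on vectors orthogonal to e j
    have horthbd : ∀ g : E, ⟪e j, g⟫ = 0 → ‖A g‖ ≤ σ (j+1) * ‖g‖ := by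
      intro g hg
      refine hAbd g (σ (j+1)) (hσpos (j+1)).le fun k hk => ?_
      rcases eq_or_lt_of_le hk with hkj | hkj
      · rw [← hkj, hg]; simp
      · exact mul_sq_le (pow_le_pow_left₀ (hσpos k).le (hσa hkj) 2)
    by_cases hr0 : r = 0
    · -- e' j ⊥ e j
      have h1 : ‖A (e' j)‖ ≤ σ (j+1) := by
        have := horthbd (e' j) (by rw [real_inner_comm]; exact hr0)
        rwa [hne', mul_one] at this
      have h2 : ‖A' (e' j) - A (e' j)‖ ≤ δ := by
        calc ‖A' (e' j) - A (e' j)‖ = ‖(A - A') (e' j)‖ := by rw [norm_sub_rev]; simp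
        _ ≤ δ * ‖e' j‖ := (A - A').le_opNorm _
        _ = δ := by rw [hne', mul_one]
      have h3 := norm_sub_norm_le (A' (e' j)) (A (e' j))
      rw [hA'e'] at h3
      have h4 : σ' (j+1) ≤ σ' j := hσ'a (Nat.le_succ j)
      linarith
    · set b : ℝ := ⟪e j, e' (j+1)⟫ with hbdef
      set w : E := b • e' j - r • e' (j+1) with hw
      have hite := orthonormal_iff_ite.mp he'
      have hworth : ⟪e j, w⟫ = 0 := by
        have h1 : (⟪e j, w⟫ : ℝ) = b * ⟪e j, e' j⟫ - r * ⟪e j, e' (j+1)⟫ := by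
          rw [hw, inner_sub_right, real_inner_smul_right, real_inner_smul_right]
        rw [h1, hba, ← hbdef]
        ring
      have hwnorm : ‖w‖ ^ 2 = b ^ 2 + r ^ 2 := by
        rw [hw, ← real_inner_self_eq_norm_sq]
        simp only [inner_sub_left, inner_sub_right, real_inner_smul_left,
          real_inner_smul_right, hite]
        simp
        ring
      have hwpos : 0 < ‖w‖ := by
        have h0 : 0 < ‖w‖ ^ 2 := by
          rw [hwnorm]
          have := sq_nonneg b
          have h1 : 0 < r ^ 2 := by positivity
          linarith
        nlinarith [norm_nonneg w]
      have hA'w : A' w = (b * σ' j) • f' j - (r * σ' (j+1)) • f' (j+1) := by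
        rw [hw, _root_.map_sub, _root_.map_smul, _root_.map_smul, tail_apply_e he' hSVD' le_rfl,
          tail_apply_e he' hSVD' (Nat.le_succ j), smul_smul, smul_smul]
      have hA'wnorm : ‖A' w‖ ^ 2 = (b * σ' j) ^ 2 + (r * σ' (j+1)) ^ 2 := by
        rw [hA'w, ← real_inner_self_eq_norm_sq]
        simp only [inner_sub_left, inner_sub_right, real_inner_smul_left,
          real_inner_smul_right, orthonormal_iff_ite.mp hf']
        simp
        ring
      have hlow : σ' (j+1) ^ 2 * ‖w‖ ^ 2 ≤ ‖A' w‖ ^ 2 := by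
        rw [hA'wnorm, hwnorm]
        have h5 : σ' (j+1) ^ 2 ≤ σ' j ^ 2 :=
          pow_le_pow_left₀ (hσ'0 (j+1)) (hσ'a (Nat.le_succ j)) 2
        have h5b : σ' (j+1) ^ 2 * b ^ 2 ≤ σ' j ^ 2 * b ^ 2 :=
          mul_le_mul_of_nonneg_right h5 (sq_nonneg b)
        have hexp : (b * σ' j) ^ 2 = σ' j ^ 2 * b ^ 2 := by ring
        have hexp2 : (r * σ' (j+1)) ^ 2 = σ' (j+1) ^ 2 * r ^ 2 := by ring
        rw [hexp, hexp2]
        have hexp3 : σ' (j+1) ^ 2 * (b ^ 2 + r ^ 2)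
            = σ' (j+1) ^ 2 * b ^ 2 + σ' (j+1) ^ 2 * r ^ 2 := by ring
        rw [hexp3]
        linarith
      have hup : ‖A' w‖ ≤ (σ (j+1) + δ) * ‖w‖ := by
        have h6 : ‖A' w - A w‖ ≤ δ * ‖w‖ := by
          calc ‖A' w - A w‖ = ‖(A - A') w‖ := by rw [norm_sub_rev]; simp
          _ ≤ δ * ‖w‖ := (A - A').le_opNorm _
        have h7 := horthbd w hworth
        have h7b := norm_sub_norm_le (A' w) (A w)
        have hexp : (σ (j+1) + δ) * ‖w‖ = σ (j+1) * ‖w‖ + δ * ‖w‖ := by ring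
        rw [hexp]
        linarith
      -- conclude
      have h8 : σ' (j+1) * ‖w‖ ≤ (σ (j+1) + δ) * ‖w‖ := by
        refine le_of_sq_le_sq' ?_ (mul_nonneg (hσ'0 _) hwpos.le)
          (mul_nonneg (by have := hσpos (j+1); linarith) hwpos.le)
        have h13 : ‖A' w‖ ^ 2 ≤ ((σ (j+1) + δ) * ‖w‖) ^ 2 :=
          pow_le_pow_left₀ (norm_nonneg _) hup 2
        calc (σ' (j+1) * ‖w‖) ^ 2 = σ' (j+1) ^ 2 * ‖w‖ ^ 2 := by ring
        _ ≤ ‖A' w‖ ^ 2 := hlow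
        _ ≤ _ := h13
      exact le_of_mul_le_mul_right h8 hwpos
  -- (d) Pythagoras and the tail bound on x
  have hpyth : ‖A' (e j)‖ ^ 2 = (σ' j * r) ^ 2 + ‖A' x‖ ^ 2 := by
    have := pyth he' hf' hSVD' j (e j)
    rwa [← hr, ← hx] at this
  have hA'x : ‖A' x‖ ≤ σ' (j+1) * ‖x‖ := by
    refine hA'bd x (σ' (j+1)) (hσ'0 _) fun k hk => ?_
    rcases eq_or_lt_of_le hk with hkj | hkj
    · rw [← hkj, hxorth]; simp
    · exact mul_sq_le (pow_le_pow_left₀ (hσ'0 k) (hσ'a hkj) 2)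
  have hrt : r ^ 2 + t = 1 := by
    have hxe : (⟪e j, x⟫ : ℝ) = 1 - r ^ 2 := by
      rw [hx, inner_sub_right, real_inner_smul_right, hba, real_inner_self_eq_norm_sq, hne]
      ring
    have h6 : (⟪x, x⟫ : ℝ) = 1 - r ^ 2 := by
      calc (⟪x, x⟫ : ℝ) = ⟪e j, x⟫ - r * ⟪e' j, x⟫ := by
            conv_lhs => rw [hx]
            rw [inner_sub_left, real_inner_smul_left]
      _ = 1 - r ^ 2 := by rw [hxorth, hxe]; ring
    have h7 : t = 1 - r ^ 2 := by rw [ht, ← real_inner_self_eq_norm_sq, h6]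
    linarith
  -- main chain
  have hchain : (σ j - δ) ^ 2 ≤ (σ j + δ) ^ 2 * (1 - t) + (σ (j+1) + δ) ^ 2 * t := by
    have h1 : (σ j - δ) ^ 2 ≤ ‖A' (e j)‖ ^ 2 := by
      have hnn : 0 ≤ σ j - δ := by linarith [hσpos (j+1)]
      exact pow_le_pow_left₀ hnn hd1 2
    have h2 : (σ' j * r) ^ 2 ≤ (σ j + δ) ^ 2 * r ^ 2 := by
      exact mul_sq_le (pow_le_pow_left₀ (hσ'0 j) hb2 2)
    have h3 : ‖A' x‖ ^ 2 ≤ (σ (j+1) + δ) ^ 2 * t := by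
      have h4 : σ' (j+1) * ‖x‖ ≤ (σ (j+1) + δ) * ‖x‖ :=
        mul_le_mul_of_nonneg_right hb3 (norm_nonneg _)
      have h5 : ‖A' x‖ ≤ (σ (j+1) + δ) * ‖x‖ := hA'x.trans h4
      have h6 : 0 ≤ (σ (j+1) + δ) * ‖x‖ :=
        mul_nonneg (by have := hσpos (j+1); linarith) (norm_nonneg _)
      calc ‖A' x‖ ^ 2 ≤ ((σ (j+1) + δ) * ‖x‖) ^ 2 := pow_le_pow_left₀ (norm_nonneg _) h5 2
      _ = (σ (j+1) + δ) ^ 2 * t := by rw [ht]; ring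
    have h7 : 1 - t = r ^ 2 := by linarith
    rw [h7]
    rw [hpyth] at h1
    linarith
  -- final algebra
  have ht0' : 0 ≤ t := by rw [ht]; positivity
  rw [le_div_iff₀ hD]
  exact alg_key hδ0 hδsmall (hσpos (j+1)) (hσ (Nat.lt_succ_self j)) ht0' hchain

lemma sigma_close (he : Orthonormal ℝ e) (hf : Orthonormal ℝ f)
    (hσpos : ∀ k, 0 < σ k) (hσa : Antitone σ)
    (hSVD : ∀ g, HasSum (fun k => σ k • (inner ℝ (e k) g : ℝ) • f k) (T g))
    (he' : Orthonormal ℝ e') (hf' : Orthonormal ℝ f')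
    (hσ'0 : ∀ k, 0 ≤ σ' k) (hσ'a : Antitone σ')
    (hSVD' : ∀ g, HasSum (fun k => σ' k • (inner ℝ (e' k) g : ℝ) • f' k) (T' g)) (j : ℕ) :
    |σ' j - σ j| ≤ ‖tailOp T σ e f j - tailOp T' σ' e' f' j‖ := by
  set A := tailOp T σ e f j
  set A' := tailOp T' σ' e' f' j
  set δ := ‖A - A'‖ with hδ
  have hAbd : ∀ g, ‖A g‖ ≤ σ j * ‖g‖ := by
    intro g
    refine tail_norm_le he hf hSVD j g (hσpos j).le fun k hk => ?_
    have h1 : σ k ^ 2 ≤ σ j ^ 2 := pow_le_pow_left₀ (hσpos k).le (hσa hk) 2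
    nlinarith [sq_nonneg (⟪e k, g⟫ : ℝ)]
  have hA'bd : ∀ g, ‖A' g‖ ≤ σ' j * ‖g‖ := by
    intro g
    refine tail_norm_le he' hf' hSVD' j g (hσ'0 j) fun k hk => ?_
    have h1 : σ' k ^ 2 ≤ σ' j ^ 2 := pow_le_pow_left₀ (hσ'0 k) (hσ'a hk) 2
    nlinarith [sq_nonneg (⟪e' k, g⟫ : ℝ)]
  have hne : ‖e j‖ = 1 := he.1 j
  have hne' : ‖e' j‖ = 1 := he'.1 j
  have hAe : ‖A (e j)‖ = σ j := by
    rw [tail_apply_e he hSVD le_rfl, norm_smul, hf.1 j]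
    simp [abs_of_pos (hσpos j)]
  have hA'e : ‖A' (e' j)‖ = σ' j := by
    rw [tail_apply_e he' hSVD' le_rfl, norm_smul, hf'.1 j]
    simp [abs_of_nonneg (hσ'0 j)]
  have hd1 : ‖A (e j) - A' (e j)‖ ≤ δ := by
    calc ‖A (e j) - A' (e j)‖ = ‖(A - A') (e j)‖ := by simp
    _ ≤ δ * ‖e j‖ := (A - A').le_opNorm _
    _ = δ := by rw [hne, mul_one]
  have hd2 : ‖A (e' j) - A' (e' j)‖ ≤ δ := by
    calc ‖A (e' j) - A' (e' j)‖ = ‖(A - A') (e' j)‖ := by simp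
    _ ≤ δ * ‖e' j‖ := (A - A').le_opNorm _
    _ = δ := by rw [hne', mul_one]
  have hlow : σ j - δ ≤ σ' j := by
    have h1 : σ j ≤ ‖A' (e j)‖ + δ := by
      rw [← hAe]
      have := norm_sub_norm_le (A (e j)) (A' (e j))
      linarith
    have h2 : ‖A' (e j)‖ ≤ σ' j := by
      have := hA'bd (e j); rwa [hne, mul_one] at this
    linarith
  have hhigh : σ' j ≤ σ j + δ := by
    have h1 : σ' j ≤ ‖A (e' j)‖ + δ := by
      rw [← hA'e]
      have := norm_sub_norm_le (A' (e' j)) (A (e' j))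
      rw [norm_sub_rev] at this
      linarith
    have h2 : ‖A (e' j)‖ ≤ σ j := by
      have := hAbd (e' j); rwa [hne', mul_one] at this
    linarith
  rw [abs_le]; constructor <;> linarith

lemma summable_orthonormal {e : ℕ → E} (he : Orthonormal ℝ e) {d : ℕ → ℝ}
    (hd : Summable fun k => d k ^ 2) : Summable fun k => d k • e k := by
  rw [summable_iff_vanishing]
  intro U hU
  obtain ⟨ε, hε, hball⟩ := Metric.mem_nhds_iff.mp hU
  obtain ⟨s, hs⟩ := (summable_iff_vanishing.mp hd) (Metric.ball 0 (ε ^ 2))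
    (Metric.ball_mem_nhds 0 (by positivity))
  refine ⟨s, fun t hts => ?_⟩
  apply hball
  rw [Metric.mem_ball, dist_zero_right]
  have h1 : ‖∑ i ∈ t, d i • e i‖ ^ 2 = ∑ i ∈ t, d i ^ 2 := by
    rw [← real_inner_self_eq_norm_sq, he.inner_sum]
    exact Finset.sum_congr rfl fun i _ => by simp [sq]
  have h2 := hs t hts
  rw [Metric.mem_ball, dist_zero_right, Real.norm_eq_abs] at h2
  have h3 : ∑ i ∈ t, d i ^ 2 < ε ^ 2 := lt_of_abs_lt h2
  nlinarith [norm_nonneg (∑ i ∈ t, d i • e i), h1]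

lemma hasSum_adjoint {T : E →L[ℝ] F} {σ : ℕ → ℝ} {e : ℕ → E} {f : ℕ → F} {C : ℝ}
    (he : Orthonormal ℝ e) (hf : Orthonormal ℝ f) (hbd : ∀ k, |σ k| ≤ C)
    (hSVD : ∀ g, HasSum (fun k => σ k • (inner ℝ (e k) g : ℝ) • f k) (T g)) (g : F) :
    HasSum (fun k => σ k • (inner ℝ (f k) g : ℝ) • e k) (adjoint T g) := by
  have hd : Summable fun k => (σ k * ⟪f k, g⟫) ^ 2 := by
    have hmaj : Summable fun k => C ^ 2 * (⟪f k, g⟫ : ℝ) ^ 2 := by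
      refine Summable.mul_left _ ?_
      have := hf.inner_products_summable (x := g)
      simpa [Real.norm_eq_abs, sq_abs] using this
    refine Summable.of_nonneg_of_le (fun k => sq_nonneg _) (fun k => ?_) hmaj
    have h1 : σ k ^ 2 ≤ C ^ 2 := by
      have := hbd k
      nlinarith [abs_nonneg (σ k), sq_abs (σ k)]
    nlinarith [sq_nonneg (⟪f k, g⟫ : ℝ)]
  have hsum : Summable fun k => (σ k * ⟪f k, g⟫) • e k := summable_orthonormal he hd
  obtain ⟨y, hy⟩ := hsum
  have hkey : y = adjoint T g := by
    refine ext_inner_left ℝ fun v => ?_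
    have h1 : HasSum (fun k => σ k * ⟪f k, g⟫ * ⟪v, e k⟫) ⟪v, y⟫ := by
      have := (innerSL ℝ v).hasSum hy
      refine this.congr_fun fun k => ?_
      simp [real_inner_smul_right, mul_comm, mul_assoc, mul_left_comm]
    have h2 : HasSum (fun k => σ k * ⟪f k, g⟫ * ⟪v, e k⟫) ⟪T v, g⟫ := by
      have := (innerSL ℝ g).hasSum (hSVD v)
      simp only [innerSL_apply_apply] at this
      have h3 : (⟪g, T v⟫ : ℝ) = ⟪T v, g⟫ := real_inner_comm _ _
      rw [h3] at this
      refine this.congr_fun fun k => ?_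
      rw [real_inner_smul_right, real_inner_smul_right,
        real_inner_comm (g) (f k), real_inner_comm (e k) v]
      ring
    have h4 := h1.unique h2
    rw [h4, ContinuousLinearMap.adjoint_inner_right]
  rw [← hkey]
  refine hy.congr_fun fun k => ?_
  rw [smul_smul]

lemma adjoint_rankOne (a : E) (b : F) :
    adjoint ((innerSL ℝ a).smulRight b) = (innerSL ℝ b).smulRight a := by
  refine ContinuousLinearMap.ext fun v => ?_
  refine ext_inner_left ℝ fun u => ?_
  rw [ContinuousLinearMap.adjoint_inner_right]
  simp only [ContinuousLinearMap.smulRight_apply, innerSL_apply_apply]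
  rw [real_inner_smul_left, real_inner_smul_right, real_inner_comm u a]
  ring

lemma adjoint_tailOp (T : E →L[ℝ] F) (σ : ℕ → ℝ) (e : ℕ → E) (f : ℕ → F) (j : ℕ) :
    adjoint (tailOp T σ e f j) = tailOp (adjoint T) σ f e j := by
  rw [tailOp, tailOp, _root_.map_sub]
  congr 1
  rw [_root_.map_sum]
  refine Finset.sum_congr rfl fun k _ => ?_
  rw [LinearIsometryEquiv.map_smulₛₗ, adjoint_rankOne]
  simp

lemma norm_adjoint_sub (A B : E →L[ℝ] F) : ‖adjoint A - adjoint B‖ = ‖A - B‖ := by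
  rw [← _root_.map_sub]
  exact (ContinuousLinearMap.adjoint : (E →L[ℝ] F) ≃ₗᵢ⋆[ℝ] (F →L[ℝ] E)).norm_map _

lemma apply_e {T : E →L[ℝ] F} {σ : ℕ → ℝ} {e : ℕ → E} {f : ℕ → F} (he : Orthonormal ℝ e)
    (hSVD : ∀ g, HasSum (fun k => σ k • (inner ℝ (e k) g : ℝ) • f k) (T g)) (i : ℕ) :
    T (e i) = σ i • f i := by
  have h1 := hSVD (e i)
  have h2 : HasSum (fun k => if k = i then σ i • f i else 0) (T (e i)) := by
    refine h1.congr_fun fun k => ?_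
    rw [orthonormal_iff_ite.mp he]
    by_cases hk : k = i
    · subst hk; simp
    · simp [hk]
  exact (h2.unique (hasSum_ite_eq i _))

lemma sigma_nonneg_of_compact {T : E →L[ℝ] F} {σ : ℕ → ℝ} {e : ℕ → E} {f : ℕ → F}
    (hcpt : IsCompactOperator T) (he : Orthonormal ℝ e) (hf : Orthonormal ℝ f)
    (hSVD : ∀ g, HasSum (fun k => σ k • (inner ℝ (e k) g : ℝ) • f k) (T g))
    (hσa : Antitone σ) : ∀ k, 0 ≤ σ k := by
  intro K0
  by_contra hneg
  push_neg at hneg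
  set c : ℝ := -σ K0 with hc
  have hc0 : 0 < c := by simp [hc]; linarith
  obtain ⟨K, hK, hKmem⟩ := hcpt
  obtain ⟨r, hr0, hball⟩ := Metric.mem_nhds_iff.mp hKmem
  set p : ℕ → F := fun k => T ((r/2) • e (K0 + k)) with hp
  have hpmem : ∀ k, p k ∈ K := by
    intro k
    apply hball
    rw [Metric.mem_ball, dist_zero_right, norm_smul, he.1 (K0 + k)]
    rw [Real.norm_eq_abs, abs_of_pos (by linarith), mul_one]
    linarith
  obtain ⟨a, _, φ, hφ, hconv⟩ := hK.tendsto_subseq hpmem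
  have hcauchy : CauchySeq (p ∘ φ) := hconv.cauchySeq
  obtain ⟨N, hN⟩ := Metric.cauchySeq_iff'.mp hcauchy ((r/2) * c) (by positivity)
  have hdist := hN (N + 1) (Nat.le_succ N)
  -- compute the distance
  have hpk : ∀ k, p k = ((r/2) * σ (K0 + k)) • f (K0 + k) := by
    intro k
    rw [hp]
    simp only
    rw [_root_.map_smul, apply_e he hSVD, smul_smul]
  have hne : K0 + φ (N+1) ≠ K0 + φ N := by
    have h := hφ (Nat.lt_succ_self N)
    simp only [Nat.succ_eq_add_one] at h
    omega
  have hsq : dist (p (φ (N+1))) (p (φ N)) ^ 2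
      = ((r/2) * σ (K0 + φ (N+1))) ^ 2 + ((r/2) * σ (K0 + φ N)) ^ 2 := by
    rw [dist_eq_norm, hpk, hpk, ← real_inner_self_eq_norm_sq]
    simp only [inner_sub_left, inner_sub_right, real_inner_smul_left, real_inner_smul_right,
      orthonormal_iff_ite.mp hf]
    simp [hne, Ne.symm hne]
    rw [if_neg (by omega), if_neg (by omega)]
    ring
  have hbig : ∀ k, ((r/2) * c) ^ 2 ≤ ((r/2) * σ (K0 + k)) ^ 2 := by
    intro k
    have h1 : σ (K0 + k) ≤ σ K0 := hσa (Nat.le_add_right K0 k)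
    have h2 : c ≤ |σ (K0 + k)| := by
      rw [abs_of_nonpos (by linarith)]
      simp [hc]; linarith
    have h3 : c ^ 2 ≤ σ (K0 + k) ^ 2 := by
      have h3a := sq_abs (σ (K0 + k))
      nlinarith [abs_nonneg (σ (K0 + k))]
    have h4 : (r/2) ^ 2 * c ^ 2 ≤ (r/2) ^ 2 * σ (K0 + k) ^ 2 :=
      mul_le_mul_of_nonneg_left h3 (sq_nonneg _)
    calc ((r/2) * c) ^ 2 = (r/2) ^ 2 * c ^ 2 := by ring
    _ ≤ (r/2) ^ 2 * σ (K0 + k) ^ 2 := h4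
    _ = ((r/2) * σ (K0 + k)) ^ 2 := by ring
  have hd2 : dist (p (φ (N+1))) (p (φ N)) ^ 2 < ((r/2) * c) ^ 2 := by
    have h0 : (0:ℝ) ≤ dist (p (φ (N+1))) (p (φ N)) := dist_nonneg
    rw [sq, sq]
    exact mul_lt_mul'' hdist hdist h0 h0
  have hb1 := hbig (φ (N+1))
  have hb2 := hbig (φ N)
  rw [hsq] at hd2
  linarith [sq_nonneg ((r/2) * c)]

lemma level_e {T : E →L[ℝ] F} {Tm : ℕ → E →L[ℝ] F} {σ : ℕ → ℝ} {e : ℕ → E} {f : ℕ → F}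
    {σm : ℕ → ℕ → ℝ} {em : ℕ → ℕ → E} {fm : ℕ → ℕ → F}
    (he : Orthonormal ℝ e) (hf : Orthonormal ℝ f)
    (hσpos : ∀ k, 0 < σ k) (hσ : StrictAnti σ)
    (hSVD : ∀ g, HasSum (fun k => σ k • (inner ℝ (e k) g : ℝ) • f k) (T g))
    (hem : ∀ m, Orthonormal ℝ (em m)) (hfm : ∀ m, Orthonormal ℝ (fm m))
    (hσm0 : ∀ m k, 0 ≤ σm m k) (hσma : ∀ m, Antitone (σm m))
    (hSVDm : ∀ m g, HasSum (fun k => σm m k • (inner ℝ (em m k) g : ℝ) • fm m k) (Tm m g))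
    (j : ℕ)
    (hj : Tendsto (fun m => ‖tailOp T σ e f j - tailOp (Tm m) (σm m) (em m) (fm m) j‖)
      atTop (𝓝 0)) :
    (∀ᶠ m in atTop,
      ‖e j - ⟪em m j, e j⟫ • em m j‖ ^ 2 ≤
        (σ j ^ 2 - (σ j -
          2 * ‖tailOp T σ e f j - tailOp (Tm m) (σm m) (em m) (fm m) j‖) ^ 2) /
          (σ j ^ 2 - σ (j + 1) ^ 2)) ∧
    Tendsto (fun m => ‖e j - ⟪em m j, e j⟫ • em m j‖) atTop (𝓝 0) := by
  set δ : ℕ → ℝ := fun m => ‖tailOp T σ e f j - tailOp (Tm m) (σm m) (em m) (fm m) j‖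
    with hδ
  have hd : 0 < σ j - σ (j+1) := sub_pos.mpr (hσ (Nat.lt_succ_self j))
  have hD : 0 < σ j ^ 2 - σ (j+1) ^ 2 := by nlinarith [hσpos j, hσpos (j+1)]
  have hev : ∀ᶠ m in atTop, 2 * δ m ≤ σ j - σ (j+1) := by
    have h1 : ∀ᶠ m in atTop, δ m < (σ j - σ (j+1)) / 2 :=
      hj.eventually (eventually_lt_nhds (by linarith) |>.mono fun x hx => hx)
    exact h1.mono fun m hm => by linarith
  have hbound : ∀ᶠ m in atTop,
      ‖e j - ⟪em m j, e j⟫ • em m j‖ ^ 2 ≤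
        (σ j ^ 2 - (σ j - 2 * δ m) ^ 2) / (σ j ^ 2 - σ (j + 1) ^ 2) :=
    hev.mono fun m hm =>
      key_bound he hf hσpos hσ hSVD (hem m) (hfm m) (hσm0 m) (hσma m) (hSVDm m) j hm
  refine ⟨hbound, ?_⟩
  -- the bound tends to zero
  have hBtendsto : Tendsto (fun m => (σ j ^ 2 - (σ j - 2 * δ m) ^ 2) / (σ j ^ 2 - σ (j + 1) ^ 2))
      atTop (𝓝 0) := by
    have h1 : Tendsto (fun m => σ j - 2 * δ m) atTop (𝓝 (σ j)) := by
      have := hj.const_mul (2:ℝ)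
      have h2 := this.const_sub (σ j)
      simpa using h2
    have h3 : Tendsto (fun m => σ j ^ 2 - (σ j - 2 * δ m) ^ 2) atTop (𝓝 0) := by
      have h4 := (h1.pow 2).const_sub (σ j ^ 2)
      simpa using h4
    have h5 := h3.div_const (σ j ^ 2 - σ (j + 1) ^ 2)
    simpa using h5
  have hsq : Tendsto (fun m => ‖e j - ⟪em m j, e j⟫ • em m j‖ ^ 2) atTop (𝓝 0) := by
    refine tendsto_of_tendsto_of_tendsto_of_le_of_le' tendsto_const_nhds hBtendsto ?_ hbound
    exact Eventually.of_forall fun m => sq_nonneg _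
  have hfinal := (Real.continuous_sqrt.tendsto 0).comp hsq
  simp only [Real.sqrt_zero] at hfinal
  refine hfinal.congr fun m => ?_
  simp only [Function.comp]
  exact Real.sqrt_sq (norm_nonneg _)

lemma rankOne_norm_le (a : E) (b : F) : ‖(innerSL ℝ a).smulRight b‖ ≤ ‖a‖ * ‖b‖ := by
  refine opNorm_le_bound _ (by positivity) fun g => ?_
  rw [smulRight_apply, innerSL_apply_apply, norm_smul, Real.norm_eq_abs]
  calc |(⟪a, g⟫ : ℝ)| * ‖b‖ ≤ (‖a‖ * ‖g‖) * ‖b‖ :=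
        mul_le_mul_of_nonneg_right (abs_real_inner_le_norm a g) (norm_nonneg b)
  _ = ‖a‖ * ‖b‖ * ‖g‖ := by ring

lemma rankOne_smul_sign (ε : ℝ) (hε : ε * ε = 1) (a : E) (b : F) :
    (innerSL ℝ (ε • a)).smulRight (ε • b) = (innerSL ℝ a).smulRight b := by
  refine ContinuousLinearMap.ext fun g => ?_
  simp only [smulRight_apply, innerSL_apply_apply, real_inner_smul_left]
  have h : ε * (⟪a, g⟫ : ℝ) * ε = ⟪a, g⟫ := by
    rw [mul_comm ε (⟪a, g⟫ : ℝ), mul_assoc, hε, mul_one]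
  rw [smul_smul, h]

lemma rankOne_diff_bound (σ1 σ2 : ℝ) (a a' : E) (b b' : F)
    (ha : ‖a‖ = 1) (hb : ‖b‖ = 1) (ha' : ‖a'‖ = 1) :
    ‖σ1 • (innerSL ℝ a).smulRight b - σ2 • (innerSL ℝ a').smulRight b'‖ ≤
      |σ1 - σ2| + |σ2| * ‖a - a'‖ + |σ2| * ‖b - b'‖ := by
  have hid : σ1 • (innerSL ℝ a).smulRight b - σ2 • (innerSL ℝ a').smulRight b'
      = (σ1 - σ2) • (innerSL ℝ a).smulRight b
        + σ2 • (innerSL ℝ (a - a')).smulRight b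
        + σ2 • (innerSL ℝ a').smulRight (b - b') := by
    refine ContinuousLinearMap.ext fun g => ?_
    simp only [ContinuousLinearMap.add_apply, ContinuousLinearMap.sub_apply,
      ContinuousLinearMap.smul_apply, smulRight_apply, innerSL_apply_apply, inner_sub_left,
      sub_smul, smul_sub, smul_smul]
    module
  rw [hid]
  have h1 : ‖(σ1 - σ2) • (innerSL ℝ a).smulRight b‖ ≤ |σ1 - σ2| := by
    refine (ContinuousLinearMap.opNorm_smul_le _ _).trans ?_
    rw [Real.norm_eq_abs]
    calc |σ1 - σ2| * ‖(innerSL ℝ a).smulRight b‖ ≤ |σ1 - σ2| * (‖a‖ * ‖b‖) :=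
          mul_le_mul_of_nonneg_left (rankOne_norm_le a b) (abs_nonneg _)
    _ = |σ1 - σ2| := by rw [ha, hb]; ring
  have h2 : ‖σ2 • (innerSL ℝ (a - a')).smulRight b‖ ≤ |σ2| * ‖a - a'‖ := by
    refine (ContinuousLinearMap.opNorm_smul_le _ _).trans ?_
    rw [Real.norm_eq_abs]
    calc |σ2| * ‖(innerSL ℝ (a - a')).smulRight b‖ ≤ |σ2| * (‖a - a'‖ * ‖b‖) :=
          mul_le_mul_of_nonneg_left (rankOne_norm_le _ _) (abs_nonneg _)
    _ = |σ2| * ‖a - a'‖ := by rw [hb]; ring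
  have h3 : ‖σ2 • (innerSL ℝ a').smulRight (b - b')‖ ≤ |σ2| * ‖b - b'‖ := by
    refine (ContinuousLinearMap.opNorm_smul_le _ _).trans ?_
    rw [Real.norm_eq_abs]
    calc |σ2| * ‖(innerSL ℝ a').smulRight (b - b')‖ ≤ |σ2| * (‖a'‖ * ‖b - b'‖) :=
          mul_le_mul_of_nonneg_left (rankOne_norm_le _ _) (abs_nonneg _)
    _ = |σ2| * ‖b - b'‖ := by rw [ha']; ring
  calc ‖_ + _ + _‖ ≤ ‖(σ1 - σ2) • (innerSL ℝ a).smulRight b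
        + σ2 • (innerSL ℝ (a - a')).smulRight b‖ + ‖σ2 • (innerSL ℝ a').smulRight (b - b')‖ :=
        norm_add_le _ _
  _ ≤ ‖(σ1 - σ2) • (innerSL ℝ a).smulRight b‖ + ‖σ2 • (innerSL ℝ (a - a')).smulRight b‖
        + ‖σ2 • (innerSL ℝ a').smulRight (b - b')‖ := by
        have := norm_add_le ((σ1 - σ2) • (innerSL ℝ a).smulRight b)
          (σ2 • (innerSL ℝ (a - a')).smulRight b)
        linarith
  _ ≤ |σ1 - σ2| + |σ2| * ‖a - a'‖ + |σ2| * ‖b - b'‖ := by linarith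

lemma inner_decomp {u v : E} (hu : ‖u‖ = 1) (hv : ‖v‖ = 1) :
    (⟪v, u⟫ : ℝ) ^ 2 + ‖u - (⟪v, u⟫ : ℝ) • v‖ ^ 2 = 1 := by
  set r : ℝ := ⟪v, u⟫ with hr
  set x : E := u - r • v with hx
  have hxorth : (⟪v, x⟫ : ℝ) = 0 := by
    rw [hx, inner_sub_right, real_inner_smul_right, ← hr, real_inner_self_eq_norm_sq, hv]
    ring
  have hxe : (⟪u, x⟫ : ℝ) = 1 - r ^ 2 := by
    have huv : (⟪u, v⟫ : ℝ) = r := (real_inner_comm v u).trans hr.symm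
    rw [hx, inner_sub_right, real_inner_smul_right, huv,
      real_inner_self_eq_norm_sq, hu]
    ring
  have h6 : (⟪x, x⟫ : ℝ) = 1 - r ^ 2 := by
    calc (⟪x, x⟫ : ℝ) = ⟪u, x⟫ - r * ⟪v, x⟫ := by
          conv_lhs => rw [hx]
          rw [inner_sub_left, real_inner_smul_left]
    _ = 1 - r ^ 2 := by rw [hxorth, hxe]; ring
  have h7 : ‖x‖ ^ 2 = 1 - r ^ 2 := by rw [← real_inner_self_eq_norm_sq, h6]
  rw [h7]; ring

lemma sub_sign_sq {u v : E} (hu : ‖u‖ = 1) (hv : ‖v‖ = 1) (ε : ℝ) (hε : ε * ε = 1) :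
    ‖u - ε • v‖ ^ 2 = 2 - 2 * (ε * ⟪v, u⟫) := by
  rw [@norm_sub_sq_real _ _ _ u (ε • v), real_inner_smul_right, real_inner_comm u v,
    norm_smul, hu]
  have h1 : (‖ε‖ * ‖v‖) ^ 2 = 1 := by
    rw [hv, Real.norm_eq_abs, mul_one, sq_abs]
    nlinarith
  rw [h1]
  ring

lemma rankOne_conv {T : E →L[ℝ] F} {Tm : ℕ → E →L[ℝ] F} {σ : ℕ → ℝ} {e : ℕ → E} {f : ℕ → F}
    {σm : ℕ → ℕ → ℝ} {em : ℕ → ℕ → E} {fm : ℕ → ℕ → F}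
    (he : Orthonormal ℝ e) (hf : Orthonormal ℝ f)
    (hσpos : ∀ k, 0 < σ k) (hσ : StrictAnti σ)
    (hSVD : ∀ g, HasSum (fun k => σ k • (inner ℝ (e k) g : ℝ) • f k) (T g))
    (hem : ∀ m, Orthonormal ℝ (em m)) (hfm : ∀ m, Orthonormal ℝ (fm m))
    (hσm0 : ∀ m k, 0 ≤ σm m k) (hσma : ∀ m, Antitone (σm m))
    (hSVDm : ∀ m g, HasSum (fun k => σm m k • (inner ℝ (em m k) g : ℝ) • fm m k) (Tm m g))
    (j : ℕ)
    (hj : Tendsto (fun m => ‖tailOp T σ e f j - tailOp (Tm m) (σm m) (em m) (fm m) j‖)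
      atTop (𝓝 0))
    (hxconv : Tendsto (fun m => ‖e j - (⟪em m j, e j⟫ : ℝ) • em m j‖) atTop (𝓝 0))
    (hyconv : Tendsto (fun m => ‖f j - (⟪fm m j, f j⟫ : ℝ) • fm m j‖) atTop (𝓝 0)) :
    Tendsto (fun m => ‖σ j • (innerSL ℝ (e j)).smulRight (f j)
      - σm m j • (innerSL ℝ (em m j)).smulRight (fm m j)‖) atTop (𝓝 0) := by
  set δ : ℕ → ℝ := fun m => ‖tailOp T σ e f j - tailOp (Tm m) (σm m) (em m) (fm m) j‖
    with hδdef
  set r : ℕ → ℝ := fun m => ⟪em m j, e j⟫ with hrdef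
  set ρ : ℕ → ℝ := fun m => ⟪fm m j, f j⟫ with hρdef
  set x : ℕ → E := fun m => e j - r m • em m j with hxdef
  set y : ℕ → F := fun m => f j - ρ m • fm m j with hydef
  have hδ0 : ∀ m, 0 ≤ δ m := fun m => norm_nonneg _
  have hsc : ∀ m, |σm m j - σ j| ≤ δ m := fun m =>
    sigma_close he hf hσpos hσ.antitone hSVD (hem m) (hfm m) (hσm0 m) (hσma m) (hSVDm m) j
  have hcross : ∀ m, |σ j * ρ m - σm m j * r m| ≤ δ m := by
    intro m
    have c1 : (⟪fm m j, tailOp (Tm m) (σm m) (em m) (fm m) j (e j)⟫ : ℝ) = σm m j * r m := by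
      rw [coeff_of_hasSum (hfm m) (hasSum_tail (Tm m) (σm m) (em m) (fm m) (hSVDm m) j (e j)) j]
      simp [tc, hrdef]
    have c2 : (⟪fm m j, tailOp T σ e f j (e j)⟫ : ℝ) = σ j * ρ m := by
      rw [tail_apply_e he hSVD le_rfl, real_inner_smul_right, hρdef]
    have c3 : σ j * ρ m - σm m j * r m
        = ⟪fm m j, (tailOp T σ e f j - tailOp (Tm m) (σm m) (em m) (fm m) j) (e j)⟫ := by
      rw [ContinuousLinearMap.sub_apply, inner_sub_right, c1, c2]
    rw [c3]
    calc |(⟪fm m j, (tailOp T σ e f j - tailOp (Tm m) (σm m) (em m) (fm m) j) (e j)⟫ : ℝ)|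
        ≤ ‖fm m j‖ * ‖(tailOp T σ e f j - tailOp (Tm m) (σm m) (em m) (fm m) j) (e j)‖ :=
          abs_real_inner_le_norm _ _
    _ ≤ 1 * (δ m * ‖e j‖) := by
          rw [(hfm m).1 j]
          exact mul_le_mul_of_nonneg_left
            ((tailOp T σ e f j - tailOp (Tm m) (σm m) (em m) (fm m) j).le_opNorm _)
            zero_le_one
    _ = δ m := by rw [he.1 j]; ring
  -- eventual smallness
  have hδev : ∀ᶠ m in atTop, δ m ≤ σ j / 8 := by
    have h1 : ∀ᶠ m in atTop, δ m < σ j / 8 :=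
      hj.eventually (eventually_lt_nhds (by have := hσpos j; linarith))
    exact h1.mono fun m hm => hm.le
  have hxev : ∀ᶠ m in atTop, ‖x m‖ ≤ 1 / 2 := by
    have h1 : ∀ᶠ m in atTop, ‖x m‖ < 1 / 2 :=
      hxconv.eventually (eventually_lt_nhds (by norm_num))
    exact h1.mono fun m hm => hm.le
  have hyev : ∀ᶠ m in atTop, ‖y m‖ ≤ 1 / 2 := by
    have h1 : ∀ᶠ m in atTop, ‖y m‖ < 1 / 2 :=
      hyconv.eventually (eventually_lt_nhds (by norm_num))
    exact h1.mono fun m hm => hm.le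
  -- identities
  have hrdec : ∀ m, r m ^ 2 + ‖x m‖ ^ 2 = 1 := fun m =>
    inner_decomp (he.1 j) ((hem m).1 j)
  have hρdec : ∀ m, ρ m ^ 2 + ‖y m‖ ^ 2 = 1 := fun m =>
    inner_decomp (hf.1 j) ((hfm m).1 j)
  -- sign control
  have hsign : ∀ᶠ m in atTop, 0 < r m * ρ m := by
    filter_upwards [hδev, hxev, hyev] with m h1 h2 h3
    have hr2 : 3 / 4 ≤ r m ^ 2 := by nlinarith [hrdec m, norm_nonneg (x m)]
    have hρ2 : 3 / 4 ≤ ρ m ^ 2 := by nlinarith [hρdec m, norm_nonneg (y m)]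
    have hr1 : |r m| ≤ 1 := by nlinarith [hrdec m, sq_nonneg (‖x m‖), sq_abs (r m), abs_nonneg (r m)]
    have hσm_low : σ j - δ m ≤ σm m j := by
      have := hsc m
      rw [abs_le] at this
      linarith [this.1]
    have hcr := hcross m
    rw [abs_le] at hcr
    -- σ j * ρ m * r m ≥ σm * r² - δ * |r| ≥ ...
    rw [abs_le] at hr1
    have hs := hcross m
    have hsr : |(σ j * ρ m - σm m j * r m) * r m| ≤ δ m := by
      rw [abs_mul]
      calc |σ j * ρ m - σm m j * r m| * |r m| ≤ δ m * 1 :=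
            mul_le_mul hs (by rw [abs_le]; exact hr1) (abs_nonneg _) (hδ0 m)
      _ = δ m := mul_one _
    rw [abs_le] at hsr
    have hσm_nonneg : 0 ≤ σ j - δ m := by have := hσpos j; linarith
    have hσmr : (σ j - δ m) * (3/4) ≤ σm m j * r m ^ 2 :=
      mul_le_mul hσm_low hr2 (by norm_num) (hσm0 m j)
    have hdecomp : σ j * (ρ m * r m)
        = (σ j * ρ m - σm m j * r m) * r m + σm m j * r m ^ 2 := by ring
    have key : σ j / 4 ≤ σ j * (ρ m * r m) := by
      rw [hdecomp]
      have := hσpos j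
      nlinarith [hsr.1, hσmr]
    have := hσpos j
    nlinarith
  -- epsilon
  set ε : ℕ → ℝ := fun m => if 0 ≤ r m then 1 else -1 with hεdef
  have hεsq : ∀ m, ε m * ε m = 1 := by
    intro m; by_cases h : 0 ≤ r m <;> simp [hεdef, h]
  have hεr : ∀ m, ε m * r m = |r m| := by
    intro m
    by_cases h : 0 ≤ r m
    · simp [hεdef, h, abs_of_nonneg h]
    · push_neg at h
      simp [hεdef, not_le.mpr h, abs_of_neg h]
  have hερ : ∀ᶠ m in atTop, ε m * ρ m = |ρ m| := by
    filter_upwards [hsign] with m hm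
    by_cases h : 0 ≤ r m
    · have hrpos : 0 < r m := by
        rcases lt_or_eq_of_le h with h' | h'
        · exact h'
        · exfalso; rw [← h'] at hm; simp at hm
      have hρpos : 0 < ρ m := by nlinarith
      simp [hεdef, h, abs_of_pos hρpos]
    · push_neg at h
      have hρneg : ρ m < 0 := by nlinarith
      simp [hεdef, not_le.mpr h, abs_of_neg hρneg]
  -- norm bounds with sign
  have hxsign : ∀ m, ‖e j - ε m • em m j‖ ≤ Real.sqrt 2 * ‖x m‖ := by
    intro m
    have h1 : ‖e j - ε m • em m j‖ ^ 2 = 2 - 2 * (ε m * r m) :=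
      sub_sign_sq (he.1 j) ((hem m).1 j) (ε m) (hεsq m)
    have hr1 : |r m| ≤ 1 := by
      nlinarith [hrdec m, sq_nonneg (‖x m‖), sq_abs (r m), abs_nonneg (r m)]
    have h2 : ‖e j - ε m • em m j‖ ^ 2 ≤ 2 * ‖x m‖ ^ 2 := by
      rw [h1, hεr m]
      nlinarith [hrdec m, sq_abs (r m), abs_nonneg (r m)]
    refine le_of_sq_le_sq' ?_ (norm_nonneg _) (by positivity)
    calc ‖e j - ε m • em m j‖ ^ 2 ≤ 2 * ‖x m‖ ^ 2 := h2
    _ = (Real.sqrt 2 * ‖x m‖) ^ 2 := by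
        rw [mul_pow, Real.sq_sqrt (by norm_num : (0:ℝ) ≤ 2)]
  have hysign : ∀ᶠ m in atTop, ‖f j - ε m • fm m j‖ ≤ Real.sqrt 2 * ‖y m‖ := by
    filter_upwards [hερ] with m hm
    have h1 : ‖f j - ε m • fm m j‖ ^ 2 = 2 - 2 * (ε m * ρ m) :=
      sub_sign_sq (hf.1 j) ((hfm m).1 j) (ε m) (hεsq m)
    have hρ1 : |ρ m| ≤ 1 := by
      nlinarith [hρdec m, sq_nonneg (‖y m‖), sq_abs (ρ m), abs_nonneg (ρ m)]
    have h2 : ‖f j - ε m • fm m j‖ ^ 2 ≤ 2 * ‖y m‖ ^ 2 := by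
      rw [h1, hm]
      nlinarith [hρdec m, sq_abs (ρ m), abs_nonneg (ρ m)]
    refine le_of_sq_le_sq' ?_ (norm_nonneg _) (by positivity)
    calc ‖f j - ε m • fm m j‖ ^ 2 ≤ 2 * ‖y m‖ ^ 2 := h2
    _ = (Real.sqrt 2 * ‖y m‖) ^ 2 := by
        rw [mul_pow, Real.sq_sqrt (by norm_num : (0:ℝ) ≤ 2)]
  -- the final bound
  set B : ℕ → ℝ := fun m =>
    δ m + (σ j + δ m) * (Real.sqrt 2 * ‖x m‖) + (σ j + δ m) * (Real.sqrt 2 * ‖y m‖) with hBdef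
  have hmain : ∀ᶠ m in atTop, ‖σ j • (innerSL ℝ (e j)).smulRight (f j)
      - σm m j • (innerSL ℝ (em m j)).smulRight (fm m j)‖ ≤ B m := by
    filter_upwards [hysign] with m hm
    have hsm : σm m j • (innerSL ℝ (em m j)).smulRight (fm m j)
        = σm m j • (innerSL ℝ (ε m • em m j)).smulRight (ε m • fm m j) := by
      rw [rankOne_smul_sign (ε m) (hεsq m)]
    rw [hsm]
    have hnorm' : ‖ε m • em m j‖ = 1 := by
      rw [norm_smul, (hem m).1 j, Real.norm_eq_abs]
      have := hεsq m
      by_cases h : 0 ≤ r m <;> simp [hεdef, h]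
    have hb := rankOne_diff_bound (σ j) (σm m j) (e j) (ε m • em m j) (f j) (ε m • fm m j)
      (he.1 j) (hf.1 j) hnorm'
    refine hb.trans ?_
    have h1 : |σ j - σm m j| ≤ δ m := by rw [abs_sub_comm]; exact hsc m
    have h2 : |σm m j| ≤ σ j + δ m := by
      rw [abs_of_nonneg (hσm0 m j)]
      have := hsc m
      rw [abs_le] at this
      linarith [this.2]
    have h3 := hxsign m
    have h4 := hm
    have h5 : 0 ≤ ‖e j - ε m • em m j‖ := norm_nonneg _
    have h6 : 0 ≤ ‖f j - ε m • fm m j‖ := norm_nonneg _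
    have h7 : 0 ≤ |σm m j| := abs_nonneg _
    have h8 : |σm m j| * ‖e j - ε m • em m j‖ ≤ (σ j + δ m) * (Real.sqrt 2 * ‖x m‖) := by
      refine mul_le_mul h2 h3 h5 ?_
      have := hσpos j; linarith [hδ0 m]
    have h9 : |σm m j| * ‖f j - ε m • fm m j‖ ≤ (σ j + δ m) * (Real.sqrt 2 * ‖y m‖) := by
      refine mul_le_mul h2 h4 h6 ?_
      have := hσpos j; linarith [hδ0 m]
    rw [hBdef]
    dsimp only
    linarith
  -- B tends to zero
  have hB0 : Tendsto B atTop (𝓝 0) := by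
    rw [hBdef]
    have h1 : Tendsto (fun m => σ j + δ m) atTop (𝓝 (σ j + 0)) := tendsto_const_nhds.add hj
    have h2 : Tendsto (fun m => Real.sqrt 2 * ‖x m‖) atTop (𝓝 (Real.sqrt 2 * 0)) :=
      tendsto_const_nhds.mul hxconv
    have h3 : Tendsto (fun m => Real.sqrt 2 * ‖y m‖) atTop (𝓝 (Real.sqrt 2 * 0)) :=
      tendsto_const_nhds.mul hyconv
    have h4 := (hj.add (h1.mul h2)).add (h1.mul h3)
    simpa using h4
  refine squeeze_zero' (Eventually.of_forall fun m => norm_nonneg _) hmain hB0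

lemma tail_succ (T : E →L[ℝ] F) (σ : ℕ → ℝ) (e : ℕ → E) (f : ℕ → F) (j : ℕ) :
    tailOp T σ e f (j + 1)
      = tailOp T σ e f j - σ j • (innerSL ℝ (e j)).smulRight (f j) := by
  rw [tailOp, tailOp, Finset.sum_range_succ, sub_add_eq_sub_sub]

lemma tail_dist_adjoint (T T' : E →L[ℝ] F) (σ σ' : ℕ → ℝ) (e e' : ℕ → E) (f f' : ℕ → F)
    (j : ℕ) :
    ‖tailOp (adjoint T) σ f e j - tailOp (adjoint T') σ' f' e' j‖
      = ‖tailOp T σ e f j - tailOp T' σ' e' f' j‖ := by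
  rw [← adjoint_tailOp, ← adjoint_tailOp, norm_adjoint_sub]


theorem main_general {T : E →L[ℝ] F} {Tm : ℕ → E →L[ℝ] F}
    (hcompact : ∀ m, IsCompactOperator (Tm m))
    (hconv : Tendsto (fun m => ‖Tm m - T‖) atTop (𝓝 0))
    {σ : ℕ → ℝ} {e : ℕ → E} {f : ℕ → F}
    (he : Orthonormal ℝ e) (hf : Orthonormal ℝ f)
    (hσpos : ∀ k, 0 < σ k) (hσ : StrictAnti σ)
    (hSVD : ∀ g, HasSum (fun k => σ k • (inner ℝ (e k) g : ℝ) • f k) (T g))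
    {σm : ℕ → ℕ → ℝ} {em : ℕ → ℕ → E} {fm : ℕ → ℕ → F}
    (hem : ∀ m, Orthonormal ℝ (em m)) (hfm : ∀ m, Orthonormal ℝ (fm m))
    (hσm : ∀ m, Antitone (σm m))
    (hSVDm : ∀ m g, HasSum (fun k => σm m k • (inner ℝ (em m k) g : ℝ) • fm m k) (Tm m g)) :
    ∀ j : ℕ,
      ((∀ᶠ m in atTop,
        ‖e j - (inner ℝ (em m j) (e j) : ℝ) • em m j‖ ^ 2 ≤
          (σ j ^ 2 - (σ j -
            2 * ‖tailOp T σ e f j - tailOp (Tm m) (σm m) (em m) (fm m) j‖) ^ 2) /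
            (σ j ^ 2 - σ (j + 1) ^ 2)) ∧
        Tendsto (fun m => ‖e j - (inner ℝ (em m j) (e j) : ℝ) • em m j‖) atTop (𝓝 0)) ∧
      ((∀ᶠ m in atTop,
        ‖f j - (inner ℝ (fm m j) (f j) : ℝ) • fm m j‖ ^ 2 ≤
          (σ j ^ 2 - (σ j -
            2 * ‖tailOp T σ e f j - tailOp (Tm m) (σm m) (em m) (fm m) j‖) ^ 2) /
            (σ j ^ 2 - σ (j + 1) ^ 2)) ∧
        Tendsto (fun m => ‖f j - (inner ℝ (fm m j) (f j) : ℝ) • fm m j‖) atTop (𝓝 0)) := by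
  have hσm0 : ∀ m k, 0 ≤ σm m k := fun m =>
    sigma_nonneg_of_compact (hcompact m) (hem m) (hfm m) (hSVDm m) (hσm m)
  have hSVDadj : ∀ g, HasSum (fun k => σ k • (inner ℝ (f k) g : ℝ) • e k) (adjoint T g) :=
    hasSum_adjoint (C := σ 0) he hf
      (fun k => by rw [abs_of_pos (hσpos k)]; exact hσ.antitone (Nat.zero_le k)) hSVD
  have hSVDmadj : ∀ m g,
      HasSum (fun k => σm m k • (inner ℝ (fm m k) g : ℝ) • em m k) (adjoint (Tm m) g) :=
    fun m => hasSum_adjoint (C := σm m 0) (hem m) (hfm m)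
      (fun k => by rw [abs_of_nonneg (hσm0 m k)]; exact (hσm m) (Nat.zero_le k)) (hSVDm m)
  have htr : ∀ j : ℕ,
      (fun m => ‖tailOp (adjoint T) σ f e j - tailOp (adjoint (Tm m)) (σm m) (fm m) (em m) j‖)
      = fun m => ‖tailOp T σ e f j - tailOp (Tm m) (σm m) (em m) (fm m) j‖ :=
    fun j => funext fun m => tail_dist_adjoint _ _ _ _ _ _ _ _ _
  have hP : ∀ j, Tendsto
      (fun m => ‖tailOp T σ e f j - tailOp (Tm m) (σm m) (em m) (fm m) j‖) atTop (𝓝 0) := by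
    intro j
    induction j with
    | zero =>
      have h0 : ∀ m, ‖tailOp T σ e f 0 - tailOp (Tm m) (σm m) (em m) (fm m) 0‖
          = ‖Tm m - T‖ := by
        intro m
        have h1 : tailOp T σ e f 0 = T := by simp [tailOp]
        have h2 : tailOp (Tm m) (σm m) (em m) (fm m) 0 = Tm m := by simp [tailOp]
        rw [h1, h2, norm_sub_rev]
      simp only [h0]
      exact hconv
    | succ j ih =>
      have hlevel := level_e he hf hσpos hσ hSVD hem hfm hσm0 hσm hSVDm j ih
      have ihadj : Tendsto (fun m => ‖tailOp (adjoint T) σ f e j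
          - tailOp (adjoint (Tm m)) (σm m) (fm m) (em m) j‖) atTop (𝓝 0) := by
        rw [htr j]; exact ih
      have hlevelf := level_e hf he hσpos hσ hSVDadj hfm hem hσm0 hσm hSVDmadj j ihadj
      have hR := rankOne_conv he hf hσpos hσ hSVD hem hfm hσm0 hσm hSVDm j ih
        hlevel.2 hlevelf.2
      have hbnd : ∀ m, ‖tailOp T σ e f (j+1) - tailOp (Tm m) (σm m) (em m) (fm m) (j+1)‖
          ≤ ‖tailOp T σ e f j - tailOp (Tm m) (σm m) (em m) (fm m) j‖
            + ‖σ j • (innerSL ℝ (e j)).smulRight (f j)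
              - σm m j • (innerSL ℝ (em m j)).smulRight (fm m j)‖ := by
        intro m
        rw [tail_succ, tail_succ, sub_sub_sub_comm]
        exact norm_sub_le _ _
      have hsum0 := ih.add hR
      rw [add_zero] at hsum0
      exact squeeze_zero (fun m => norm_nonneg _) hbnd hsum0
  intro j
  constructor
  · exact level_e he hf hσpos hσ hSVD hem hfm hσm0 hσm hSVDm j (hP j)
  · have hadj : Tendsto (fun m => ‖tailOp (adjoint T) σ f e j
        - tailOp (adjoint (Tm m)) (σm m) (fm m) (em m) j‖) atTop (𝓝 0) := by
      rw [htr j]; exact hP j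
    have h2 := level_e hf he hσpos hσ hSVDadj hfm hem hσm0 hσm hSVDmadj j hadj
    refine ⟨?_, h2.2⟩
    refine h2.1.mono fun m hm => ?_
    rwa [tail_dist_adjoint] at hm


end SVDAux

/-- If a family of compact operators `H(m)` converges in operator norm to
the Hankel operator `H`, whose singular values are all positive and non-degenerate, then the
singular vectors of `H(m)` converge in norm to those of `H`, with the quantitative bound
`‖x_j(m)‖² ≤ (σ_j² − (σ_j − 2‖H_j − H_j(m)‖)²)/(σ_j² − σ_{j+1}²)` holding for `m` large
enough, where `x_j(m)` is the component of `e_j` orthogonal to `e_j(m)`; and analogously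
for the vectors `f_j`. -/
theorem singular_vector_convergence
    {H : Type*} [NormedAddCommGroup H] [InnerProductSpace ℝ H] [CompleteSpace H]
    [TopologicalSpace.SeparableSpace H] {n : ℕ}
    (Hop : Fock (EuclideanSpace ℝ (Fin n)) n →L[ℝ] Fock H n)
    (Hm : ℕ → (Fock (EuclideanSpace ℝ (Fin n)) n →L[ℝ] Fock H n))
    (hcompact : ∀ m, IsCompactOperator (Hm m))
    (hconv : Tendsto (fun m => ‖Hm m - Hop‖) atTop (𝓝 0))
    -- singular value decomposition of `H`, with positive non-degenerate singular values
    (σ : ℕ → ℝ) (e : ℕ → Fock (EuclideanSpace ℝ (Fin n)) n) (f : ℕ → Fock H n)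
    (he : Orthonormal ℝ e) (hf : Orthonormal ℝ f)
    (hσpos : ∀ k, 0 < σ k) (hσ : StrictAnti σ)
    (hSVD : ∀ g, HasSum (fun k => σ k • (inner ℝ (e k) g : ℝ) • f k) (Hop g))
    -- singular value decompositions of the `H(m)`, singular values ordered decreasingly
    (σm : ℕ → ℕ → ℝ) (em : ℕ → ℕ → Fock (EuclideanSpace ℝ (Fin n)) n)
    (fm : ℕ → ℕ → Fock H n)
    (hem : ∀ m, Orthonormal ℝ (em m)) (hfm : ∀ m, Orthonormal ℝ (fm m))
    (hσm : ∀ m, Antitone (σm m))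
    (hSVDm : ∀ m g, HasSum (fun k => σm m k • (inner ℝ (em m k) g : ℝ) • fm m k) (Hm m g)) :
    ∀ j : ℕ,
      ((∀ᶠ m in atTop,
        ‖e j - (inner ℝ (em m j) (e j) : ℝ) • em m j‖ ^ 2 ≤
          (σ j ^ 2 - (σ j -
            2 * ‖(Hop - ∑ k ∈ Finset.range j, σ k • (innerSL ℝ (e k)).smulRight (f k)) -
              (Hm m - ∑ k ∈ Finset.range j,
                σm m k • (innerSL ℝ (em m k)).smulRight (fm m k))‖) ^ 2) /
            (σ j ^ 2 - σ (j + 1) ^ 2)) ∧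
        Tendsto (fun m => ‖e j - (inner ℝ (em m j) (e j) : ℝ) • em m j‖) atTop (𝓝 0)) ∧
      ((∀ᶠ m in atTop,
        ‖f j - (inner ℝ (fm m j) (f j) : ℝ) • fm m j‖ ^ 2 ≤
          (σ j ^ 2 - (σ j -
            2 * ‖(Hop - ∑ k ∈ Finset.range j, σ k • (innerSL ℝ (e k)).smulRight (f k)) -
              (Hm m - ∑ k ∈ Finset.range j,
                σm m k • (innerSL ℝ (em m k)).smulRight (fm m k))‖) ^ 2) /
            (σ j ^ 2 - σ (j + 1) ^ 2)) ∧
        Tendsto (fun m => ‖f j - (inner ℝ (fm m j) (f j) : ℝ) • fm m j‖) atTop (𝓝 0)) := by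
  intro j
  exact SVDAux.main_general hcompact hconv he hf hσpos hσ hSVD hem hfm hσm hSVDm j

end
end

section
/- The Volterra kernels satisfy the following invariance property of the mixed L¹–L² norm: for all p, q, k, j ∈ ℕ₀ with p + q = k + j, ‖h_{k,j}‖_{L¹_{k+1} L²_{k+j}(HS((ℝⁿ)^{⊗(j+1)}, 𝓗 ⊗ (ℝⁿ)^{⊗k}))} = ‖h_{p,q}‖_{L¹_{k+1} L²_{k+j}(HS((ℝⁿ)^{⊗(q+1)}, 𝓗 ⊗ (ℝⁿ)^{⊗p}))}. -/
open MeasureTheory ContinuousLinearMap Filter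
open scoped ENNReal NNReal Topology RealInnerProductSpace

noncomputable section

section kernels

variable {X H : Type*} [NormedAddCommGroup X] [InnerProductSpace ℝ X] [CompleteSpace X]
  [NormedAddCommGroup H] [InnerProductSpace ℝ H] [CompleteSpace H] {n : ℕ}

/-- The Volterra kernel `h_{k,j}`, as a Hilbert–Schmidt tensor valued function of
`k+j+1` positive time variables; the component at `(i, β)` is
`O_k(t₀,…,t_k) P_j^*(t_{k+j},…,t_{k+1},0) (ψ_i ⊗ ê_β)`. -/
def volterraKernel (T : ℝ → X →L[ℝ] X) (N : Fin n → X →L[ℝ] X) (C : X →L[ℝ] H)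
    (ψ : Fin n → X) (k j : ℕ) (t : Fin (k + j + 1) → ℝ) :
    PiLp 2 (fun _ : Fin n × (Fin j → Fin n) => Tens H n k) := WithLp.toLp 2 fun p =>
  Ok T N C k (fun i : Fin (k + 1) => t ⟨i, by omega⟩)
    (adjoint (Pk T N j (fun i : Fin (j + 1) =>
        if (i : ℕ) = j then 0 else t ⟨k + j - (i : ℕ), by omega⟩))
      (WithLp.toLp 2 (fun β : Fin j → Fin n => if β = p.2 then ψ p.1 else 0) : Tens X n j))

/-- The mixed `L¹_i L²_m` norm of a function of `m+1` positive variables: the `L¹` norm is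
taken in the variable at position `i` and the `L²` norm in the remaining `m` variables. -/
def mixedL1L2 {m : ℕ} {E : Type*} [NormedAddCommGroup E] (i : Fin (m + 1))
    (f : (Fin (m + 1) → ℝ) → E) : ℝ≥0∞ :=
  ∫⁻ s in Set.Ioi (0 : ℝ),
    (∫⁻ y in posOrthant m, ((‖f (i.insertNth s y)‖₊ : ℝ≥0∞)) ^ 2) ^ (1 / 2 : ℝ)

/-- The `𝓗²` Hardy norm of a function of `k` complex variables on the product of right
half-planes. -/
def hardyH2 {k : ℕ} {E : Type*} [NormedAddCommGroup E] (F : (Fin k → ℂ) → E) : ℝ≥0∞ :=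
  ⨆ x : Fin k → ℝ,
    ENNReal.ofReal ((2 * Real.pi) ^ (-(k : ℝ) / 2)) *
      (∫⁻ y in posOrthant k,
        ((‖F (fun i => (x i : ℂ) + (y i : ℂ) * Complex.I)‖₊ : ℝ≥0∞)) ^ 2) ^ (1 / 2 : ℝ)

/-- The mixed `𝓗^∞_i 𝓗²_k` Hardy norm of a function of `k+1` complex variables: the sup is
taken over the variable at position `i` ranging over the right half-plane, and the `𝓗²` norm
over the remaining `k` variables. -/
def mixedHardy {k : ℕ} {E : Type*} [NormedAddCommGroup E] (i : Fin (k + 1))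
    (F : (Fin (k + 1) → ℂ) → E) : ℝ≥0∞ :=
  ⨆ s ∈ {z : ℂ | 0 < z.re}, hardyH2 fun y => F (i.insertNth s y)

/-- The `k`-th order transfer function `G_k(s) = ∫_{(0,∞)^{k+1}} h_{k,0}(t) e^{-⟨s,t⟩} dt`,
with values in the complexification of the Hilbert space of Hilbert–Schmidt tensors
(first component: real part; second component: imaginary part). -/
def transferFn (T : ℝ → X →L[ℝ] X) (N : Fin n → X →L[ℝ] X) (C : X →L[ℝ] H)
    (ψ : Fin n → X) (k : ℕ) (s : Fin (k + 1) → ℂ) :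
    WithLp 2 ((PiLp 2 fun _ : Fin n × (Fin 0 → Fin n) => Tens H n k) ×
      (PiLp 2 fun _ : Fin n × (Fin 0 → Fin n) => Tens H n k)) :=
  (WithLp.equiv 2 _).symm
    (∫ t in posOrthant (k + 1),
        (Real.exp (-∑ i, (s i).re * t i) * Real.cos (∑ i, (s i).im * t i)) •
          volterraKernel T N C ψ k 0 t,
     ∫ t in posOrthant (k + 1),
        (-(Real.exp (-∑ i, (s i).re * t i) * Real.sin (∑ i, (s i).im * t i))) •
          volterraKernel T N C ψ k 0 t)

end kernels

section aux

variable {X H : Type*} [NormedAddCommGroup X] [InnerProductSpace ℝ X] [CompleteSpace X]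
  [NormedAddCommGroup H] [InnerProductSpace ℝ H] [CompleteSpace H] {n : ℕ}

lemma adjoint_listProd (L : List (X →L[ℝ] X)) :
    adjoint L.prod = (L.reverse.map adjoint).prod := by
  induction L with
  | nil => simp [ContinuousLinearMap.one_def, adjoint_id]
  | cons a l ih =>
      rw [List.prod_cons, ← star_eq_adjoint, star_mul, star_eq_adjoint, star_eq_adjoint, ih]
      simp

lemma ofFn_reverse {α : Type*} {m : ℕ} (f : Fin m → α) :
    (List.ofFn f).reverse = List.ofFn (fun i => f i.rev) := by
  apply List.ext_getElem
  · simp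
  · intro i h1 h2
    rw [List.getElem_reverse, List.getElem_ofFn, List.getElem_ofFn]
    congr 1
    apply Fin.ext
    simp only [Fin.val_rev]
    simp at h1 h2 ⊢
    omega

lemma adjoint_Pchain (T : ℝ → X →L[ℝ] X) (N : Fin n → X →L[ℝ] X) {j : ℕ}
    (s : Fin (j + 1) → ℝ) (β : Fin j → Fin n) :
    adjoint (Pchain T N s β) =
      T (s (Fin.last j)) *
        (List.ofFn fun r : Fin j => N (β r.rev) * T (s r.rev.castSucc)).prod := by
  unfold Pchain
  rw [← star_eq_adjoint, star_mul, star_eq_adjoint, star_eq_adjoint, adjoint_adjoint,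
    adjoint_listProd, ofFn_reverse, List.map_ofFn]
  refine congrArg (T (s (Fin.last j)) * ·) (congrArg List.prod (congrArg List.ofFn
    (funext fun r => ?_)))
  show adjoint (adjoint (T (s r.rev.castSucc)) * adjoint (N (β r.rev))) = _
  rw [← star_eq_adjoint, star_mul, star_eq_adjoint, star_eq_adjoint, adjoint_adjoint,
    adjoint_adjoint]

end aux
section aux2

variable {X H : Type*} [NormedAddCommGroup X] [InnerProductSpace ℝ X] [CompleteSpace X]
  [NormedAddCommGroup H] [InnerProductSpace ℝ H] [CompleteSpace H] {n : ℕ}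

/-- Concatenation of a `k`-multi-index with a reversed `j`-multi-index. -/
def splice (k j : ℕ) (α : Fin k → Fin n) (β : Fin j → Fin n) : Fin (k + j) → Fin n :=
  fun l => if h : (l : ℕ) < k then α ⟨l.1, h⟩ else β ⟨k + j - 1 - l.1, by have := l.2; omega⟩

/-- The splice map as an equivalence. -/
def spliceEquiv (n k j : ℕ) : ((Fin j → Fin n) × (Fin k → Fin n)) ≃ (Fin (k + j) → Fin n) where
  toFun p := splice k j p.2 p.1
  invFun γ := (fun r => γ ⟨k + j - 1 - r.1, by have := r.2; omega⟩,
               fun l => γ ⟨l.1, by have := l.2; omega⟩)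
  left_inv p := by
    refine Prod.ext (funext fun r => ?_) (funext fun l => ?_)
    · show splice k j p.2 p.1 _ = _
      rw [splice, dif_neg (show ¬ (k + j - 1 - (r : ℕ) < k) by have := r.2; omega)]
      exact congrArg p.1 (Fin.ext
        (show k + j - 1 - (k + j - 1 - (r : ℕ)) = (r : ℕ) by have := r.2; omega))
    · show splice k j p.2 p.1 _ = _
      rw [splice, dif_pos (show ((l : ℕ) < k) from l.2)]
  right_inv γ := by
    funext l
    show splice k j _ _ l = γ l
    rw [splice]
    by_cases h : (l : ℕ) < k
    · rw [dif_pos h]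
    · rw [dif_neg h]
      exact congrArg γ (Fin.ext
        (show k + j - 1 - (k + j - 1 - (l : ℕ)) = (l : ℕ) by have := l.2; omega))

lemma Ochain_splice (T : ℝ → X →L[ℝ] X) (N : Fin n → X →L[ℝ] X) (hT0 : T 0 = 1)
    {k j : ℕ} (t : Fin (k + j + 1) → ℝ) (α : Fin k → Fin n) (β : Fin j → Fin n) :
    Ochain T N t (splice k j α β) =
      Ochain T N (fun i : Fin (k + 1) => t ⟨i.1, by have := i.2; omega⟩) α *
        adjoint (Pchain T N (fun i : Fin (j + 1) =>
          if (i : ℕ) = j then 0 else t ⟨k + j - (i : ℕ), by have := i.2; omega⟩) β) := by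
  rw [adjoint_Pchain]
  beta_reduce
  have h1 : (if ((Fin.last j : Fin (j + 1)) : ℕ) = j then (0 : ℝ)
      else t ⟨k + j - ((Fin.last j : Fin (j + 1)) : ℕ), by have := (Fin.last j).2; omega⟩) = 0 :=
    if_pos rfl
  rw [h1, hT0, one_mul]
  unfold Ochain
  rw [List.ofFn_add, List.prod_append, ← mul_assoc]
  congr 1
  · congr 1
    refine congrArg List.prod (congrArg List.ofFn (funext fun i => ?_))
    rw [splice, dif_pos (show ((Fin.castLE (by omega) i : Fin (k + j)) : ℕ) < k from i.2)]
    beta_reduce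
    congr 1
  · refine congrArg List.prod (congrArg List.ofFn (funext fun r => ?_))
    rw [splice, dif_neg (show ¬ ((Fin.natAdd k r : Fin (k + j)) : ℕ) < k by simp)]
    beta_reduce
    rw [if_neg (show ¬ ((r.rev.castSucc : Fin (j + 1)) : ℕ) = j by
      have := r.2; simp [Fin.val_rev]; omega)]
    congr 1
    · exact congrArg N (congrArg β (Fin.ext (by
        have := r.2; simp [Fin.val_rev]; omega)))
    · exact congrArg T (congrArg t (Fin.ext (by
        have := r.2; simp [Fin.val_rev]; omega)))

end aux2
section aux3

variable {X H : Type*} [NormedAddCommGroup X] [InnerProductSpace ℝ X] [CompleteSpace X]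
  [NormedAddCommGroup H] [InnerProductSpace ℝ H] [CompleteSpace H] {n : ℕ}

lemma adjoint_Pk_delta (T : ℝ → X →L[ℝ] X) (N : Fin n → X →L[ℝ] X) {j : ℕ}
    (s : Fin (j + 1) → ℝ) (β : Fin j → Fin n) (v : X) :
    adjoint (Pk T N j s) (WithLp.toLp 2 (fun β' => if β' = β then v else 0) : Tens X n j) =
      adjoint (Pchain T N s β) v := by
  apply ext_inner_right ℝ
  intro x
  rw [adjoint_inner_left, adjoint_inner_left]
  have hterm : ∀ β' : Fin j → Fin n,
      (inner ℝ ((if β' = β then v else 0 : X)) ((Pk T N j s x : Tens X n j) β') : ℝ) =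
        if β' = β then (inner ℝ v (Pchain T N s β' x) : ℝ) else 0 := by
    intro β'
    have hPk : (Pk T N j s x : Tens X n j) β' = Pchain T N s β' x := rfl
    rw [hPk]
    split <;> simp
  rw [PiLp.inner_apply]
  simp only [WithLp.ofLp_toLp]
  rw [Finset.sum_congr rfl (fun β' _ => hterm β'),
    Finset.sum_ite_eq' Finset.univ β (fun β' => (inner ℝ v (Pchain T N s β' x) : ℝ))]
  simp

lemma vk_apply (T : ℝ → X →L[ℝ] X) (N : Fin n → X →L[ℝ] X) (C : X →L[ℝ] H) (ψ : Fin n → X)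
    (k j : ℕ) (t : Fin (k + j + 1) → ℝ) (p : Fin n × (Fin j → Fin n)) (α : Fin k → Fin n) :
    volterraKernel T N C ψ k j t p α =
      C (Ochain T N (fun i : Fin (k + 1) => t ⟨i.1, by have := i.2; omega⟩) α
        (adjoint (Pk T N j (fun i : Fin (j + 1) =>
          if (i : ℕ) = j then 0 else t ⟨k + j - (i : ℕ), by have := i.2; omega⟩))
          (WithLp.toLp 2 (fun β' => if β' = p.2 then ψ p.1 else 0) : Tens X n j))) := rfl

end aux3
section aux4

variable {X H : Type*} [NormedAddCommGroup X] [InnerProductSpace ℝ X] [CompleteSpace X]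
  [NormedAddCommGroup H] [InnerProductSpace ℝ H] [CompleteSpace H] {n : ℕ}

/-- The pointwise squared `ℓ²`-norm of the Volterra kernel, in canonical form depending only
on the total number `m = k + j` of interior time variables. -/
def kerNormSq (T : ℝ → X →L[ℝ] X) (N : Fin n → X →L[ℝ] X) (C : X →L[ℝ] H) (ψ : Fin n → X)
    (m : ℕ) (t : Fin (m + 1) → ℝ) : ℝ≥0 :=
  ∑ i : Fin n, ∑ γ : Fin m → Fin n, ‖C (Ochain T N t γ (ψ i))‖₊ ^ 2

lemma vk_nnnorm_sq (T : ℝ → X →L[ℝ] X) (N : Fin n → X →L[ℝ] X) (C : X →L[ℝ] H)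
    (ψ : Fin n → X) (hT0 : T 0 = 1) (k j : ℕ) (t : Fin (k + j + 1) → ℝ) :
    ‖volterraKernel T N C ψ k j t‖₊ ^ 2 = kerNormSq T N C ψ (k + j) t := by
  rw [PiLp.nnnorm_eq_of_L2, NNReal.sq_sqrt]
  have hcomp : ∀ p : Fin n × (Fin j → Fin n),
      ‖volterraKernel T N C ψ k j t p‖₊ ^ 2 =
        ∑ α : Fin k → Fin n, ‖C (Ochain T N t (splice k j α p.2) (ψ p.1))‖₊ ^ 2 := by
    intro p
    rw [PiLp.nnnorm_eq_of_L2, NNReal.sq_sqrt]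
    refine Finset.sum_congr rfl fun α _ => ?_
    rw [vk_apply, adjoint_Pk_delta, ← ContinuousLinearMap.mul_apply,
      ← Ochain_splice T N hT0 t α p.2]
  rw [Finset.sum_congr rfl fun p _ => hcomp p]
  rw [kerNormSq, Fintype.sum_prod_type]
  refine Finset.sum_congr rfl fun i _ => ?_
  calc
    ∑ β : Fin j → Fin n, ∑ α : Fin k → Fin n,
        ‖C (Ochain T N t (splice k j α β) (ψ i))‖₊ ^ 2
      = ∑ q : (Fin j → Fin n) × (Fin k → Fin n),
          ‖C (Ochain T N t (splice k j q.2 q.1) (ψ i))‖₊ ^ 2 :=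
        (Fintype.sum_prod_type
          (f := fun q : (Fin j → Fin n) × (Fin k → Fin n) =>
            ‖C (Ochain T N t (splice k j q.2 q.1) (ψ i))‖₊ ^ 2)).symm
    _ = ∑ γ : Fin (k + j) → Fin n, ‖C (Ochain T N t γ (ψ i))‖₊ ^ 2 :=
        Fintype.sum_equiv (spliceEquiv n k j) _ _ fun q => rfl

/-- The canonical mixed norm, depending only on `m` and the `L¹` position `kk`. -/
def Psi (T : ℝ → X →L[ℝ] X) (N : Fin n → X →L[ℝ] X) (C : X →L[ℝ] H) (ψ : Fin n → X)
    (m kk : ℕ) : ℝ≥0∞ :=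
  if h : kk < m + 1 then
    ∫⁻ s in Set.Ioi (0 : ℝ),
      (∫⁻ y in posOrthant m,
        ((kerNormSq T N C ψ m ((⟨kk, h⟩ : Fin (m + 1)).insertNth s y) : ℝ≥0) : ℝ≥0∞))
        ^ (1 / 2 : ℝ)
  else 0

lemma mixed_eq_Psi (T : ℝ → X →L[ℝ] X) (N : Fin n → X →L[ℝ] X) (C : X →L[ℝ] H)
    (ψ : Fin n → X) (hT0 : T 0 = 1) (k j : ℕ) (i : Fin (k + j + 1)) :
    mixedL1L2 i (volterraKernel T N C ψ k j) = Psi T N C ψ (k + j) i.1 := by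
  rw [Psi, dif_pos i.isLt]
  simp only [Fin.eta]
  unfold mixedL1L2
  refine lintegral_congr fun s => ?_
  congr 1
  refine lintegral_congr fun y => ?_
  rw [← ENNReal.coe_pow]
  exact congrArg _ (vk_nnnorm_sq T N C ψ hT0 k j (i.insertNth s y))

end aux4
/-- The Volterra kernels satisfy the invariance property of the mixed
`L¹–L²` norm: for all `p, q, k, j` with `p + q = k + j`,
`‖h_{k,j}‖_{L¹_{k+1} L²_{k+j}} = ‖h_{p,q}‖_{L¹_{k+1} L²_{k+j}}`. -/
theorem volterra_kernel_mixed_norm_invariance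
    {X H : Type*} [NormedAddCommGroup X] [InnerProductSpace ℝ X] [CompleteSpace X]
    [TopologicalSpace.SeparableSpace X]
    [NormedAddCommGroup H] [InnerProductSpace ℝ H] [CompleteSpace H]
    [TopologicalSpace.SeparableSpace H] {n : ℕ}
    (T : ℝ → X →L[ℝ] X) (N : Fin n → X →L[ℝ] X) (ψ : Fin n → X) (C : X →L[ℝ] H)
    (M ν : ℝ) (hT : IsC0SemigroupWith T M ν) (hstab : StabilityCond N M ν) :
    ∀ (p q k j : ℕ) (hpq : p + q = k + j),
      mixedL1L2 (⟨k, by omega⟩ : Fin (k + j + 1)) (volterraKernel T N C ψ k j) =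
        mixedL1L2 (⟨k, by omega⟩ : Fin (p + q + 1)) (volterraKernel T N C ψ p q) := by
  intro p q k j hpq
  have hT0 : T 0 = 1 := hT.2.2.1
  rw [mixed_eq_Psi T N C ψ hT0 k j ⟨k, by omega⟩, mixed_eq_Psi T N C ψ hT0 p q ⟨k, by omega⟩]
  show Psi T N C ψ (k + j) k = Psi T N C ψ (p + q) k
  rw [hpq]

end
end
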